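/- arXiv:1001.4565 — 2 statements merged into one kernel-verified Lean document; each statement's English description precedes it below -/
import Mathlib

section
/- Let (B,L) be a regular Hadamard pair. If C_1 and C_2 are two distinct B-extreme L-cycles, then the subspaces H(C_1) and H(C_2) of L²(μ_B) are orthogonal. -/
open MeasureTheory Complex Filter Topology

noncomputable section

def expv {d : ℕ} (t x : Fin d → ℝ) : ℂ :=
  Complex.exp (2 * Real.pi * Complex.I * (∑ i, t i * x i))

def Rmat {d : ℕ} (R : Matrix (Fin d) (Fin d) ℤ) : Matrix (Fin d) (Fin d) ℝ :=
  R.map Int.cast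

def vecR {d : ℕ} (b : Fin d → ℤ) : Fin d → ℝ := fun i => (b i : ℝ)

def tauB {d : ℕ} (R : Matrix (Fin d) (Fin d) ℤ) (b : Fin d → ℤ) (x : Fin d → ℝ) :
    Fin d → ℝ :=
  (Rmat R)⁻¹.mulVec (x + vecR b)

def tauL {d : ℕ} (R : Matrix (Fin d) (Fin d) ℤ) (l : Fin d → ℤ) (x : Fin d → ℝ) :
    Fin d → ℝ :=
  ((Rmat R).transpose)⁻¹.mulVec (x + vecR l)

/-- `σ_l(x) = Rᵀ x + l`. -/
def sigmaL {d : ℕ} (R : Matrix (Fin d) (Fin d) ℤ) (l : Fin d → ℤ) (x : Fin d → ℝ) :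
    Fin d → ℝ :=
  (Rmat R).transpose.mulVec x + vecR l

def Expansive {d : ℕ} (R : Matrix (Fin d) (Fin d) ℤ) : Prop :=
  ∀ z : ℂ, (R.map (Int.cast : ℤ → ℂ)).charpoly.IsRoot z → 1 < ‖z‖

def chiB {d : ℕ} (B : Finset (Fin d → ℤ)) (x : Fin d → ℝ) : ℂ :=
  (B.card : ℂ)⁻¹ * ∑ b ∈ B, expv (vecR b) x

def hadMat {d : ℕ} (R : Matrix (Fin d) (Fin d) ℤ) (B L : Finset (Fin d → ℤ)) :
    Matrix B L ℂ :=
  fun b l => ((Real.sqrt (B.card) : ℝ) : ℂ)⁻¹ *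
    expv ((Rmat R)⁻¹.mulVec (vecR (b : Fin d → ℤ))) (vecR (l : Fin d → ℤ))

def IsHadamardPair {d : ℕ} (R : Matrix (Fin d) (Fin d) ℤ)
    (B L : Finset (Fin d → ℤ)) : Prop :=
  (hadMat R B L).conjTranspose * hadMat R B L = 1 ∧
    hadMat R B L * (hadMat R B L).conjTranspose = 1

/-- A (finite) `L`-cycle: distinct points `x_0, …, x_p` with
`τ_{l_i} x_i = x_{i+1 (mod p+1)}` for some digits `l_i ∈ L`. -/
def IsLCycle {d : ℕ} (R : Matrix (Fin d) (Fin d) ℤ) (L : Finset (Fin d → ℤ))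
    (C : Set (Fin d → ℝ)) : Prop :=
  ∃ p : ℕ, ∃ x : Fin (p + 1) → (Fin d → ℝ), ∃ l : Fin (p + 1) → (Fin d → ℤ),
    Function.Injective x ∧ (∀ i, l i ∈ L) ∧
    (∀ i, tauL R (l i) (x i) = x (i + 1)) ∧ C = Set.range x

/-- A `B`-extreme set: `|χ_B(x)| = 1` for all `x ∈ C`. -/
def BExtreme {d : ℕ} (B : Finset (Fin d → ℤ)) (C : Set (Fin d → ℝ)) : Prop :=
  ∀ x ∈ C, ‖chiB B x‖ = 1

/-- `Γ(B) = {∑_{k=0}^n R^k b_k : b_k ∈ B}` (viewed inside `ℝ^d`). -/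
def GammaBSet {d : ℕ} (R : Matrix (Fin d) (Fin d) ℤ) (B : Finset (Fin d → ℤ)) :
    Set (Fin d → ℝ) :=
  {y | ∃ n : ℕ, ∃ bs : Fin (n + 1) → (Fin d → ℤ), (∀ k, bs k ∈ B) ∧
    y = ∑ k : Fin (n + 1), ((Rmat R) ^ (k : ℕ)).mulVec (vecR (bs k))}

/-- `Λ(C)`: the smallest subset of `ℝ^d` containing `-C` and invariant under all
`σ_l`, `l ∈ L`. -/
def LambdaC {d : ℕ} (R : Matrix (Fin d) (Fin d) ℤ) (L : Finset (Fin d → ℤ))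
    (C : Set (Fin d → ℝ)) : Set (Fin d → ℝ) :=
  ⋂₀ {Λ : Set (Fin d → ℝ) | (∀ c ∈ C, -c ∈ Λ) ∧
    ∀ l ∈ L, ∀ x ∈ Λ, sigmaL R l x ∈ Λ}

/-- `H(C)`: the closed span of the exponentials `e_λ`, `λ ∈ Λ(C)`. -/
def HCyc {d : ℕ} {μ : Measure (Fin d → ℝ)} (E : (Fin d → ℝ) → Lp ℂ 2 μ)
    (R : Matrix (Fin d) (Fin d) ℤ) (L : Finset (Fin d → ℤ))
    (C : Set (Fin d → ℝ)) : Submodule ℂ (Lp ℂ 2 μ) :=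
  (Submodule.span ℂ {g : Lp ℂ 2 μ | ∃ lam ∈ LambdaC R L C, g = E lam}).topologicalClosure



-- ===================== auxiliary lemmas =====================

open scoped Fin.NatCast Fin.CommRing

lemma expv_dot {d : ℕ} (t x : Fin d → ℝ) :
    expv t x = Complex.exp (2 * Real.pi * Complex.I * ((dotProduct t x : ℝ) : ℂ)) := rfl

lemma expv_cont {d : ℕ} (t : Fin d → ℝ) : Continuous (expv t) := by
  apply Complex.continuous_exp.comp
  apply Continuous.mul continuous_const
  apply Complex.continuous_ofReal.comp
  exact continuous_finset_sum _ (fun i _ => (continuous_const.mul (continuous_apply i)))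

lemma expv_norm {d : ℕ} (t x : Fin d → ℝ) : ‖expv t x‖ = 1 := by
  have hre : (2 * (Real.pi : ℂ) * Complex.I * ((∑ i, t i * x i : ℝ) : ℂ)).re = 0 := by
    simp [Complex.mul_re, Complex.mul_im]
  simp only [expv, Complex.norm_exp, hre, Real.exp_zero]

lemma expv_conj {d : ℕ} (t x : Fin d → ℝ) :
    (starRingEnd ℂ) (expv t x) = expv (-t) x := by
  rw [expv_dot, expv_dot, ← Complex.exp_conj]
  congr 1
  rw [neg_dotProduct]
  simp only [map_mul, Complex.conj_I, Complex.conj_ofReal, map_ofNat]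
  push_cast
  ring

lemma expv_add_fst {d : ℕ} (t s x : Fin d → ℝ) :
    expv (t + s) x = expv t x * expv s x := by
  rw [expv_dot, expv_dot, expv_dot, ← Complex.exp_add, add_dotProduct]
  push_cast
  ring_nf

lemma expv_add_snd {d : ℕ} (t x y : Fin d → ℝ) :
    expv t (x + y) = expv t x * expv t y := by
  rw [expv_dot, expv_dot, expv_dot, ← Complex.exp_add, dotProduct_add]
  push_cast
  ring_nf

lemma expv_int_dot {d : ℕ} (t x : Fin d → ℝ) (hz : ∃ z : ℤ, dotProduct t x = (z : ℝ)) :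
    expv t x = 1 := by
  obtain ⟨z, hzz⟩ := hz
  rw [expv_dot, hzz]
  rw [show 2 * (Real.pi:ℂ) * Complex.I * ((z:ℝ):ℂ) = (z : ℂ) * (2 * Real.pi * Complex.I) by
    push_cast; ring]
  exact Complex.exp_int_mul_two_pi_mul_I z

lemma expv_eq_one_int {d : ℕ} (t x : Fin d → ℝ) (h : expv t x = 1) :
    ∃ z : ℤ, dotProduct t x = (z : ℝ) := by
  rw [expv_dot, Complex.exp_eq_one_iff] at h
  obtain ⟨z, hz⟩ := h
  refine ⟨z, ?_⟩
  have h2 : (2 * (Real.pi:ℂ) * Complex.I) ≠ 0 := by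
    simp [Real.pi_ne_zero, Complex.I_ne_zero]
  have h3 : ((dotProduct t x : ℝ) : ℂ) = (z : ℂ) := by
    apply mul_left_cancel₀ h2
    rw [hz]
    ring
  exact_mod_cast h3

lemma ortho_closure {F : Type*} [NormedAddCommGroup F] [InnerProductSpace ℂ F]
    (s t : Set F) (h : ∀ a ∈ s, ∀ b ∈ t, (inner ℂ a b : ℂ) = 0) :
    ∀ f ∈ (Submodule.span ℂ s).topologicalClosure,
    ∀ g ∈ (Submodule.span ℂ t).topologicalClosure, (inner ℂ f g : ℂ) = 0 := by
  have h1 : ∀ a ∈ Submodule.span ℂ s, ∀ b ∈ Submodule.span ℂ t, (inner ℂ a b : ℂ) = 0 := by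
    intro a ha
    induction ha using Submodule.span_induction with
    | mem u hu =>
      intro b hb
      induction hb using Submodule.span_induction with
      | mem v hv => exact h u hu v hv
      | zero => simp
      | add v w _ _ hv hw => rw [inner_add_right, hv, hw, add_zero]
      | smul c v _ hv => rw [inner_smul_right, hv, mul_zero]
    | zero => intro b _; simp
    | add u v _ _ hu hv => intro b hb; rw [inner_add_left, hu b hb, hv b hb, add_zero]
    | smul c u _ hu => intro b hb; rw [inner_smul_left, hu b hb, mul_zero]
  have h2 : ∀ a ∈ Submodule.span ℂ s,
      ∀ g ∈ (Submodule.span ℂ t).topologicalClosure, (inner ℂ a g : ℂ) = 0 := by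
    intro a ha g hg
    have hcl : (↑(Submodule.span ℂ t).topologicalClosure : Set F)
        = closure (Submodule.span ℂ t : Set F) := Submodule.topologicalClosure_coe _
    have hg' : g ∈ closure (Submodule.span ℂ t : Set F) := by
      rw [← hcl]; exact hg
    have hZ : IsClosed {y : F | (inner ℂ a y : ℂ) = 0} := by
      have : Continuous fun y : F => (inner ℂ a y : ℂ) :=
        Continuous.inner continuous_const continuous_id
      exact isClosed_eq this continuous_const
    exact closure_minimal (fun y hy => h1 a ha y hy) hZ hg'
  intro f hf g hg
  have hcl : (↑(Submodule.span ℂ s).topologicalClosure : Set F)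
      = closure (Submodule.span ℂ s : Set F) := Submodule.topologicalClosure_coe _
  have hf' : f ∈ closure (Submodule.span ℂ s : Set F) := by rw [← hcl]; exact hf
  have hZ : IsClosed {y : F | (inner ℂ y g : ℂ) = 0} := by
    have : Continuous fun y : F => (inner ℂ y g : ℂ) :=
      Continuous.inner continuous_id continuous_const
    exact isClosed_eq this continuous_const
  exact closure_minimal (fun y hy => h2 y hy g hg) hZ hf'

lemma chi_align {d : ℕ} (B : Finset (Fin d → ℤ)) (hB0 : (0 : Fin d → ℤ) ∈ B)
    (y : Fin d → ℝ) (h : ‖chiB B y‖ = 1) :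
    ∀ b ∈ B, expv (vecR b) y = 1 := by
  classical
  set u : (Fin d → ℤ) → ℂ := fun b => expv (vecR b) y with hu
  have hcard : (0 : ℕ) < B.card := Finset.card_pos.mpr ⟨0, hB0⟩
  set s : ℂ := ∑ b ∈ B, u b with hs
  have hnorm : ∀ b, ‖u b‖ = 1 := fun b => expv_norm _ _
  have habs : ‖s‖ = B.card := by
    have h2 : ‖((B.card : ℂ)⁻¹)‖ * ‖s‖ = 1 := by
      rw [← norm_mul]; exact h
    have h3 : ‖((B.card : ℂ)⁻¹)‖ = (B.card : ℝ)⁻¹ := by simp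
    rw [h3] at h2
    field_simp at h2
    linarith [h2]
  have hterm : ∀ b ∈ B, (starRingEnd ℂ s * u b) = (B.card : ℂ) := by
    intro b hb
    have hle : ∀ b' ∈ B, ((starRingEnd ℂ s * u b').re) ≤ (B.card : ℝ) := by
      intro b' _
      calc (starRingEnd ℂ s * u b').re ≤ ‖starRingEnd ℂ s * u b'‖ :=
            Complex.re_le_norm _
        _ = ‖s‖ * 1 := by rw [norm_mul, Complex.norm_conj, hnorm]
        _ = B.card := by rw [habs, mul_one]
    have hsum : ∑ b' ∈ B, (starRingEnd ℂ s * u b').re = (B.card : ℝ) * B.card := by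
      have hss : ∑ b' ∈ B, (starRingEnd ℂ s * u b') = starRingEnd ℂ s * s := by
        rw [← Finset.mul_sum, ← hs]
      calc ∑ b' ∈ B, (starRingEnd ℂ s * u b').re
          = (∑ b' ∈ B, starRingEnd ℂ s * u b').re := by rw [Complex.re_sum]
        _ = (starRingEnd ℂ s * s).re := by rw [hss]
        _ = ‖s‖ ^ 2 := by
            rw [mul_comm, Complex.mul_conj, Complex.sq_norm]
            simp
        _ = (B.card : ℝ) * B.card := by rw [habs]; ring
    have heq : ∀ b' ∈ B, (starRingEnd ℂ s * u b').re = (B.card : ℝ) := by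
      by_contra hcon
      push_neg at hcon
      obtain ⟨b₀, hb₀, hb₀ne⟩ := hcon
      have hlt : (starRingEnd ℂ s * u b₀).re < (B.card : ℝ) :=
        lt_of_le_of_ne (hle b₀ hb₀) hb₀ne
      have hbad : ∑ b' ∈ B, (starRingEnd ℂ s * u b').re < ∑ b' ∈ B, (B.card : ℝ) :=
        Finset.sum_lt_sum (fun i hi => hle i hi) ⟨b₀, hb₀, hlt⟩
      rw [hsum, Finset.sum_const, nsmul_eq_mul, mul_comm] at hbad
      exact lt_irrefl _ hbad
    have hre : (starRingEnd ℂ s * u b).re = (B.card : ℝ) := heq b hb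
    have habs' : ‖starRingEnd ℂ s * u b‖ = (B.card : ℝ) := by
      rw [norm_mul, Complex.norm_conj, hnorm, habs, mul_one]
    have him : (starRingEnd ℂ s * u b).im = 0 := by
      have h1 : (starRingEnd ℂ s * u b).re ^ 2 + (starRingEnd ℂ s * u b).im ^ 2
          = ‖starRingEnd ℂ s * u b‖ ^ 2 := by
        rw [Complex.sq_norm, Complex.normSq_apply]; ring
      rw [hre, habs'] at h1
      nlinarith [sq_nonneg ((starRingEnd ℂ s * u b).im)]
    apply Complex.ext
    · simpa using hre
    · simpa using him
  have hu0 : u 0 = 1 := by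
    rw [hu]
    have hz : vecR (0 : Fin d → ℤ) = fun _ => (0:ℝ) := by funext i; simp [vecR]
    simp [expv, hz]
  have hsne : starRingEnd ℂ s ≠ 0 := by
    intro h0
    have hs0 : s = 0 := by
      have := congrArg (starRingEnd ℂ) h0
      simpa using this
    rw [hs0] at habs
    simp at habs
    exact hcard.ne' (by exact_mod_cast habs.symm)
  intro b hb
  have h1 := hterm b hb
  have h2 := hterm 0 hB0
  rw [hu0, mul_one] at h2
  rw [h2] at h1
  have hNc : (B.card : ℂ) ≠ 0 := by
    exact_mod_cast Nat.cast_ne_zero.mpr hcard.ne'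
  have hub : u b = 1 := by
    field_simp at h1
    tauto
  exact hub

lemma Rmat_mapC {d : ℕ} (R : Matrix (Fin d) (Fin d) ℤ) :
    (Rmat R).map (Complex.ofReal) = R.map (Int.cast : ℤ → ℂ) := by
  ext i j
  simp [Rmat, Matrix.map_apply]

lemma charpoly_eval_det {n : ℕ} (M : Matrix (Fin n) (Fin n) ℂ) (z : ℂ) :
    M.charpoly.eval z = (Matrix.scalar (Fin n) z - M).det := by
  rw [Matrix.charpoly, eval_det, Matrix.matPolyEquiv_charmatrix]
  simp

lemma det_Rmat_ne_zero {d : ℕ} (R : Matrix (Fin d) (Fin d) ℤ) (hexp : Expansive R) :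
    (Rmat R).det ≠ 0 := by
  intro h0
  have hC : (R.map (Int.cast : ℤ → ℂ)).det = 0 := by
    rw [← Rmat_mapC]
    have hd := (RingHom.map_det (algebraMap ℝ ℂ) (Rmat R)).symm
    have h2 : ((algebraMap ℝ ℂ).mapMatrix (Rmat R)) = (Rmat R).map (Complex.ofReal) := rfl
    rw [← h2, hd, h0, map_zero]
  have hroot : (R.map (Int.cast : ℤ → ℂ)).charpoly.IsRoot 0 := by
    have hco := Matrix.det_eq_sign_charpoly_coeff (R.map (Int.cast : ℤ → ℂ))
    rw [hC] at hco
    have hcz : (R.map (Int.cast : ℤ → ℂ)).charpoly.coeff 0 = 0 := by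
      have hne : ((-1 : ℂ)) ^ (Fintype.card (Fin d)) ≠ 0 := by simp
      exact (mul_eq_zero.mp hco.symm).resolve_left hne
    rwa [Polynomial.IsRoot.def, ← Polynomial.coeff_zero_eq_eval_zero]
  have hgt := hexp 0 hroot
  simp at hgt
  linarith

lemma no_unit_eigen {d : ℕ} (R : Matrix (Fin d) (Fin d) ℤ) (hexp : Expansive R)
    (m : ℕ) (hm : 0 < m) (v : Fin d → ℝ) (hv : v ≠ 0)
    (h : ((((Rmat R).transpose) ^ m).mulVec v) = v) : False := by
  classical
  set T : Matrix (Fin d) (Fin d) ℂ := (R.map (Int.cast : ℤ → ℂ)).transpose with hT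
  set w : Fin d → ℂ := fun i => (v i : ℂ) with hw
  have hwne : w ≠ 0 := by
    intro h0
    apply hv
    funext i
    have := congrFun h0 i
    simpa [hw] using this
  have hTm : (T ^ m).mulVec w = w := by
    have hcast : ∀ (M : Matrix (Fin d) (Fin d) ℝ) (u : Fin d → ℝ),
        (M.map Complex.ofReal).mulVec (fun i => ((u i : ℝ) : ℂ))
          = fun i => ((M.mulVec u i : ℝ) : ℂ) := by
      intro M u
      funext i
      simp [Matrix.mulVec, dotProduct]
    have hmap : (((Rmat R).transpose) ^ m).map Complex.ofReal = T ^ m := by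
      have h1 : ((Rmat R).transpose).map Complex.ofReal = T := by
        rw [hT, ← Rmat_mapC]
        ext i j; simp [Matrix.map_apply]
      calc (((Rmat R).transpose) ^ m).map Complex.ofReal
          = ((algebraMap ℝ ℂ).mapMatrix (((Rmat R).transpose) ^ m)) := rfl
        _ = ((algebraMap ℝ ℂ).mapMatrix ((Rmat R).transpose)) ^ m := by rw [map_pow]
        _ = T ^ m := by
            rw [show ((algebraMap ℝ ℂ).mapMatrix ((Rmat R).transpose))
              = ((Rmat R).transpose).map Complex.ofReal from rfl, h1]
    rw [← hmap]
    rw [hcast, h]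
  have h1spec : (1 : ℂ) ∈ spectrum ℂ (T ^ m) := by
    rw [spectrum.mem_iff]
    intro hunit
    rw [Matrix.isUnit_iff_isUnit_det] at hunit
    have hdet : ((algebraMap ℂ (Matrix (Fin d) (Fin d) ℂ)) 1 - T ^ m).det = 0 := by
      rw [← Matrix.exists_mulVec_eq_zero_iff]
      refine ⟨w, hwne, ?_⟩
      rw [Matrix.sub_mulVec, hTm]
      simp
    rw [hdet] at hunit
    exact (by simp at hunit : False)
  have hmapspec : spectrum ℂ (T ^ m) = (fun z : ℂ => z ^ m) '' spectrum ℂ T := by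
    have hdeg : 0 < (Polynomial.X ^ m : Polynomial ℂ).degree := by
      rw [Polynomial.degree_X_pow]
      exact_mod_cast hm
    have := spectrum.map_polynomial_aeval_of_degree_pos T (Polynomial.X ^ m : Polynomial ℂ) hdeg
    simpa using this
  rw [hmapspec] at h1spec
  obtain ⟨z, hz, hzm⟩ := h1spec
  have hzroot : (R.map (Int.cast : ℤ → ℂ)).charpoly.IsRoot z := by
    rw [spectrum.mem_iff] at hz
    have hdet0 : (Matrix.scalar (Fin d) z - T).det = 0 := by
      by_contra hne
      exact hz (by
        rw [Matrix.isUnit_iff_isUnit_det]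
        have hd : ((algebraMap ℂ (Matrix (Fin d) (Fin d) ℂ)) z - T).det ≠ 0 := by
          simpa [Matrix.scalar, Matrix.algebraMap_eq_diagonal] using hne
        exact Ne.isUnit hd)
    rw [Polynomial.IsRoot.def, charpoly_eval_det]
    rw [show Matrix.scalar (Fin d) z - R.map (Int.cast : ℤ → ℂ)
        = (Matrix.scalar (Fin d) z - T).transpose from ?_]
    · rw [Matrix.det_transpose]; exact hdet0
    · rw [Matrix.transpose_sub, hT, Matrix.transpose_transpose]
      congr 1
      ext i j
      simp [Matrix.scalar, Matrix.diagonal, Matrix.transpose_apply, eq_comm]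
  have habs := hexp z hzroot
  simp only at hzm
  have habs1 : ‖z‖ ^ m = 1 := by
    rw [← norm_pow, hzm, norm_one]
  have h2 : 1 < ‖z‖ ^ m := one_lt_pow₀ habs hm.ne'
  rw [habs1] at h2
  exact lt_irrefl _ h2

lemma tauB_cont {d : ℕ} (R : Matrix (Fin d) (Fin d) ℤ) (b : Fin d → ℤ) :
    Continuous (tauB R b) :=
  Continuous.matrix_mulVec continuous_const (continuous_id.add continuous_const)

lemma integrable_expv {d : ℕ} (t : Fin d → ℝ) (ν : Measure (Fin d → ℝ)) [IsFiniteMeasure ν] :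
    Integrable (expv t) ν := by
  refine Integrable.mono' (integrable_const 1) (expv_cont t).aestronglyMeasurable ?_
  filter_upwards with a
  rw [expv_norm]

lemma Fh_scale {d N : ℕ} (R : Matrix (Fin d) (Fin d) ℤ) (B : Finset (Fin d → ℤ))
    (hBcard : B.card = N)
    (μ : Measure (Fin d → ℝ)) [IsProbabilityMeasure μ]
    (hμinv : μ = (N : ENNReal)⁻¹ • ∑ b ∈ B, μ.map (tauB R b))
    (hSdet : IsUnit ((Rmat R).transpose).det) (s : Fin d → ℝ) :
    (∫ x, expv (((Rmat R).transpose).mulVec s) x ∂μ)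
      = chiB B s * ∫ x, expv s x ∂μ := by
  classical
  set S := (Rmat R).transpose with hS
  have hpt : ∀ b x, expv (S.mulVec s) (tauB R b x) = expv (vecR b) s * expv s x := by
    intro b x
    have hdot : dotProduct (S.mulVec s) (tauB R b x)
        = dotProduct s x + dotProduct (vecR b) s := by
      rw [tauB, Matrix.dotProduct_mulVec]
      have h1 : (Rmat R)⁻¹ = (S⁻¹).transpose := by
        rw [Matrix.transpose_nonsing_inv, hS, Matrix.transpose_transpose]
      rw [h1, Matrix.vecMul_transpose, Matrix.mulVec_mulVec, Matrix.nonsing_inv_mul _ hSdet,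
        Matrix.one_mulVec, dotProduct_add]
      rw [dotProduct_comm s (vecR b)]
    rw [expv_dot, hdot, expv_dot, expv_dot, ← Complex.exp_add]
    push_cast
    ring_nf
  have hmeas : ∀ b : Fin d → ℤ, AEMeasurable (tauB R b) μ :=
    fun b => (tauB_cont R b).measurable.aemeasurable
  have hint : ∀ b ∈ B, Integrable (expv (S.mulVec s)) (μ.map (tauB R b)) := by
    intro b _
    haveI : IsProbabilityMeasure (μ.map (tauB R b)) := Measure.isProbabilityMeasure_map (hmeas b)
    exact integrable_expv _ _
  calc (∫ x, expv (S.mulVec s) x ∂μ)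
      = ∫ x, expv (S.mulVec s) x ∂((N : ENNReal)⁻¹ • ∑ b ∈ B, μ.map (tauB R b)) := by
        rw [← hμinv]
    _ = ((N : ENNReal)⁻¹).toReal • ∑ b ∈ B, ∫ x, expv (S.mulVec s) x ∂(μ.map (tauB R b)) := by
        rw [integral_smul_measure, integral_finset_sum_measure hint]
    _ = ((N:ℝ)⁻¹) • ∑ b ∈ B, (expv (vecR b) s * ∫ x, expv s x ∂μ) := by
        congr 1
        · rw [ENNReal.toReal_inv]; simp
        · apply Finset.sum_congr rfl
          intro b _
          rw [integral_map (hmeas b) (expv_cont _).aestronglyMeasurable]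
          calc ∫ x, expv (S.mulVec s) (tauB R b x) ∂μ
              = ∫ x, expv (vecR b) s * expv s x ∂μ := by
                apply integral_congr_ae
                filter_upwards with x
                exact hpt b x
            _ = expv (vecR b) s * ∫ x, expv s x ∂μ := MeasureTheory.integral_const_mul _ _
    _ = chiB B s * ∫ x, expv s x ∂μ := by
        rw [chiB, hBcard, Complex.real_smul, ← Finset.sum_mul]
        push_cast
        ring

lemma chi_had {d N : ℕ} (R : Matrix (Fin d) (Fin d) ℤ) (B L : Finset (Fin d → ℤ))
    (hBcard : B.card = N) (hN : 0 < N)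
    (hHad : IsHadamardPair R B L)
    {l l' : Fin d → ℤ} (hl : l ∈ L) (hl' : l' ∈ L) (hne : l ≠ l') :
    chiB B (((Rmat R).transpose)⁻¹.mulVec (vecR l' - vecR l)) = 0 := by
  classical
  set S := (Rmat R).transpose with hS
  have hentry := congrFun (congrFun hHad.1 ⟨l, hl⟩) ⟨l', hl'⟩
  have hone : (1 : Matrix L L ℂ) ⟨l, hl⟩ ⟨l', hl'⟩ = 0 := by
    rw [Matrix.one_apply_ne]
    intro hcon
    exact hne (congrArg Subtype.val hcon)
  rw [hone] at hentry
  rw [Matrix.mul_apply] at hentry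
  have hsq : ((Real.sqrt (B.card) : ℝ) : ℂ)⁻¹ * ((Real.sqrt (B.card) : ℝ) : ℂ)⁻¹
      = ((B.card : ℝ) : ℂ)⁻¹ := by
    rw [← mul_inv]
    congr 1
    rw [← Complex.ofReal_mul, Real.mul_self_sqrt (by positivity)]
  have hsum : ∀ b ∈ B,
      (starRingEnd ℂ) (((Real.sqrt (B.card) : ℝ) : ℂ)⁻¹ *
          expv ((Rmat R)⁻¹.mulVec (vecR b)) (vecR l)) *
        (((Real.sqrt (B.card) : ℝ) : ℂ)⁻¹ *
          expv ((Rmat R)⁻¹.mulVec (vecR b)) (vecR l'))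
      = ((B.card : ℝ) : ℂ)⁻¹ * expv (vecR b) (S⁻¹.mulVec (vecR l' - vecR l)) := by
    intro b _
    rw [map_mul, expv_conj]
    have hc : (starRingEnd ℂ) (((Real.sqrt (B.card) : ℝ) : ℂ)⁻¹)
        = ((Real.sqrt (B.card) : ℝ) : ℂ)⁻¹ := by
      rw [map_inv₀, Complex.conj_ofReal]
    rw [hc]
    have hdot : dotProduct (vecR b) (S⁻¹.mulVec (vecR l' - vecR l))
        = dotProduct (-(Rmat R)⁻¹.mulVec (vecR b)) (vecR l)
          + dotProduct ((Rmat R)⁻¹.mulVec (vecR b)) (vecR l') := by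
      rw [Matrix.dotProduct_mulVec]
      have h1 : S⁻¹ = ((Rmat R)⁻¹).transpose := by
        rw [hS, ← Matrix.transpose_nonsing_inv]
      rw [h1, Matrix.vecMul_transpose, dotProduct_sub]
      rw [neg_dotProduct]
      ring
    rw [expv_dot (vecR b), hdot]
    rw [expv_dot (-(Rmat R)⁻¹.mulVec (vecR b)), expv_dot ((Rmat R)⁻¹.mulVec (vecR b))]
    rw [← hsq]
    push_cast
    rw [mul_add, Complex.exp_add]
    ring
  rw [chiB]
  have hBne : ((B.card : ℂ)) ≠ 0 := by
    rw [hBcard]; exact_mod_cast Nat.cast_ne_zero.mpr hN.ne'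
  have hsum2 : ∑ b : {x // x ∈ B}, ((B.card : ℝ) : ℂ)⁻¹
      * expv (vecR (b : Fin d → ℤ)) (S⁻¹.mulVec (vecR l' - vecR l)) = 0 := by
    rw [← hentry]
    apply Finset.sum_congr rfl
    intro b _
    rw [Matrix.conjTranspose_apply, hadMat, hadMat]
    exact (hsum b b.2).symm
  rw [Finset.sum_coe_sort B (fun b => ((B.card : ℝ) : ℂ)⁻¹
      * expv (vecR b) (S⁻¹.mulVec (vecR l' - vecR l)))] at hsum2
  rw [← Finset.mul_sum] at hsum2
  have hzero : ∑ b ∈ B, expv (vecR b) (S⁻¹.mulVec (vecR l' - vecR l)) = 0 := by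
    have h2 : (((B.card : ℝ) : ℂ))⁻¹ ≠ 0 := by simpa using hBne
    exact (mul_eq_zero.mp hsum2).resolve_left h2
  rw [hzero, mul_zero]

lemma chiB_translate {d : ℕ} (B : Finset (Fin d → ℤ)) (u y : Fin d → ℝ)
    (h : ∀ b ∈ B, ∃ z : ℤ, dotProduct (vecR b) u = (z : ℝ)) :
    chiB B (u + y) = chiB B y := by
  rw [chiB, chiB]
  congr 1
  apply Finset.sum_congr rfl
  intro b hb
  rw [expv_add_snd, expv_int_dot _ _ (h b hb), one_mul]

lemma lambda_rep {d : ℕ} (R : Matrix (Fin d) (Fin d) ℤ) (L : Finset (Fin d → ℤ))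
    (C : Set (Fin d → ℝ)) :
    ∀ lamv ∈ LambdaC R L C, ∃ n : ℕ, ∃ w : ℕ → (Fin d → ℝ), ∃ aw : ℕ → (Fin d → ℤ),
      (∃ c ∈ C, w 0 = -c) ∧ (∀ k, k < n → aw k ∈ L) ∧
      (∀ k, k < n → w (k+1) = sigmaL R (aw k) (w k)) ∧ w n = lamv := by
  classical
  set G : Set (Fin d → ℝ) := {lamv | ∃ n : ℕ, ∃ w : ℕ → (Fin d → ℝ), ∃ aw : ℕ → (Fin d → ℤ),
      (∃ c ∈ C, w 0 = -c) ∧ (∀ k, k < n → aw k ∈ L) ∧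
      (∀ k, k < n → w (k+1) = sigmaL R (aw k) (w k)) ∧ w n = lamv} with hG
  have hGmem : G ∈ {Λ : Set (Fin d → ℝ) | (∀ c ∈ C, -c ∈ Λ) ∧
      ∀ l ∈ L, ∀ x ∈ Λ, sigmaL R l x ∈ Λ} := by
    constructor
    · intro c hc
      exact ⟨0, fun _ => -c, fun _ => 0, ⟨c, hc, rfl⟩, by omega, by omega, rfl⟩
    · rintro l hl x ⟨n, w, aw, hw0, hdig, hrec, hwn⟩
      refine ⟨n+1, fun k => if k = n+1 then sigmaL R l x else w k,
        fun k => if k = n then l else aw k, ?_, ?_, ?_, ?_⟩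
      · obtain ⟨c, hc, hc0⟩ := hw0
        exact ⟨c, hc, by simp [hc0]⟩
      · intro k hk
        by_cases hkn : k = n
        · simp [hkn, hl]
        · have hlt : k < n := by omega
          simp [hkn, hdig k hlt]
      · intro k hk
        by_cases hkn : k = n
        · subst hkn
          simp [hwn]
        · have h1 : k < n := by omega
          have h2 : k + 1 ≠ n + 1 := by omega
          have h3 : k ≠ n + 1 := by omega
          simp [h2, h3, hkn, hrec k h1]
      · simp
  intro lamv hlam
  exact hlam G hGmem

lemma dotR_int {d : ℕ} (b m : Fin d → ℤ) :
    dotProduct (vecR b) (vecR m) = ((dotProduct b m : ℤ) : ℝ) := by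
  simp [dotProduct, vecR]

lemma castMulVec' {d : ℕ} (A : Matrix (Fin d) (Fin d) ℤ) (m : Fin d → ℤ) :
    (A.map (Int.cast : ℤ → ℝ)).mulVec (vecR m) = vecR (A.mulVec m) := by
  funext i
  simp [Matrix.mulVec, dotProduct, vecR, Matrix.map_apply]

lemma Spow_cast {d : ℕ} (R : Matrix (Fin d) (Fin d) ℤ) (k : ℕ) :
    ((Rmat R).transpose) ^ k = ((R.transpose ^ k).map (Int.cast : ℤ → ℝ)) := by
  have h1 : (Rmat R).transpose = (R.transpose).map (Int.cast : ℤ → ℝ) := by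
    ext i j; simp [Rmat, Matrix.transpose_apply, Matrix.map_apply]
  rw [h1]
  calc ((R.transpose).map (Int.cast : ℤ → ℝ)) ^ k
      = ((Int.castRingHom ℝ).mapMatrix (R.transpose)) ^ k := rfl
    _ = (Int.castRingHom ℝ).mapMatrix (R.transpose ^ k) := (map_pow _ _ _).symm
    _ = (R.transpose ^ k).map (Int.cast : ℤ → ℝ) := rfl

lemma Spow_vec_int {d : ℕ} (R : Matrix (Fin d) (Fin d) ℤ) (k : ℕ) (b m : Fin d → ℤ) :
    ∃ z : ℤ, dotProduct (vecR b) ((((Rmat R).transpose) ^ k).mulVec (vecR m)) = (z : ℝ) := by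
  rw [Spow_cast, castMulVec', dotR_int]
  exact ⟨_, rfl⟩

lemma cycle_dot_int {d p : ℕ} (R : Matrix (Fin d) (Fin d) ℤ) (B : Finset (Fin d → ℤ))
    (x : Fin (p+1) → Fin d → ℝ) (l : Fin (p+1) → Fin d → ℤ)
    (hkey : ∀ i, ((Rmat R).transpose).mulVec (x (i+1)) = x i + vecR (l i))
    (hext : ∀ i, ∀ b ∈ B, ∃ z : ℤ, dotProduct (vecR b) (x i) = (z : ℝ)) :
    ∀ k : ℕ, ∀ i, ∀ b ∈ B, ∃ z : ℤ,
      dotProduct (vecR b) ((((Rmat R).transpose) ^ k).mulVec (x i)) = (z : ℝ) := by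
  intro k
  induction k with
  | zero =>
    intro i b hb
    simpa [Matrix.one_mulVec] using hext i b hb
  | succ k ih =>
    intro i b hb
    have hi : (i - 1) + 1 = i := by ring
    have hS : (((Rmat R).transpose) ^ (k+1)).mulVec (x i)
        = (((Rmat R).transpose) ^ k).mulVec (x (i-1))
          + (((Rmat R).transpose) ^ k).mulVec (vecR (l (i-1))) := by
      have hkey' : ((Rmat R).transpose).mulVec (x i) = x (i-1) + vecR (l (i-1)) := by
        have h2 := hkey (i-1)
        rwa [hi] at h2
      rw [pow_succ, ← Matrix.mulVec_mulVec, hkey', Matrix.mulVec_add]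
    rw [hS, dotProduct_add]
    obtain ⟨z1, hz1⟩ := ih (i-1) b hb
    obtain ⟨z2, hz2⟩ := Spow_vec_int R k b (l (i-1))
    exact ⟨z1 + z2, by rw [hz1, hz2]; push_cast; ring⟩

lemma chain_dot_int {d : ℕ} (R : Matrix (Fin d) (Fin d) ℤ) (B : Finset (Fin d → ℤ))
    (lam : ℕ → Fin d → ℝ) (a : ℕ → Fin d → ℤ) (n : ℕ)
    (hrec : ∀ j, j < n → lam (j+1) = sigmaL R (a j) (lam j))
    (hbase : ∀ b ∈ B, ∀ k : ℕ, ∃ z : ℤ,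
      dotProduct (vecR b) ((((Rmat R).transpose) ^ k).mulVec (lam 0)) = (z : ℝ)) :
    ∀ j, j ≤ n → ∀ b ∈ B, ∀ k : ℕ, ∃ z : ℤ,
      dotProduct (vecR b) ((((Rmat R).transpose) ^ k).mulVec (lam j)) = (z : ℝ) := by
  intro j
  induction j with
  | zero => intro _ b hb k; exact hbase b hb k
  | succ j ih =>
    intro hj b hb k
    have hj' : j ≤ n := by omega
    have hrecj := hrec j (by omega)
    rw [hrecj, sigmaL, Matrix.mulVec_add, dotProduct_add, Matrix.mulVec_mulVec,
      ← pow_succ]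
    obtain ⟨z1, hz1⟩ := ih hj' b hb (k+1)
    obtain ⟨z2, hz2⟩ := Spow_vec_int R k b (a j)
    refine ⟨z1 + z2, ?_⟩
    rw [hz1, hz2]
    push_cast
    ring

lemma chain_dot_int0 {d : ℕ} (R : Matrix (Fin d) (Fin d) ℤ) (B : Finset (Fin d → ℤ))
    (lam : ℕ → Fin d → ℝ) (a : ℕ → Fin d → ℤ) (n : ℕ)
    (hrec : ∀ j, j < n → lam (j+1) = sigmaL R (a j) (lam j))
    (hbase : ∀ b ∈ B, ∀ k : ℕ, ∃ z : ℤ,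
      dotProduct (vecR b) ((((Rmat R).transpose) ^ k).mulVec (lam 0)) = (z : ℝ)) :
    ∀ j, j ≤ n → ∀ b ∈ B, ∃ z : ℤ,
      dotProduct (vecR b) (lam j) = (z : ℝ) := by
  intro j hj b hb
  obtain ⟨z, hz⟩ := chain_dot_int R B lam a n hrec hbase j hj b hb 0
  exact ⟨z, by rw [← hz]; simp [Matrix.one_mulVec]⟩

lemma chain_build {d p : ℕ} (R : Matrix (Fin d) (Fin d) ℤ) (L : Finset (Fin d → ℤ))
    (x : Fin (p+1) → Fin d → ℝ) (l : Fin (p+1) → Fin d → ℤ)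
    (hl : ∀ i, l i ∈ L)
    (hstep : ∀ i, sigmaL R (l i) (-(x (i+1))) = -(x i))
    (P n₁ : ℕ) (w : ℕ → Fin d → ℝ) (aw : ℕ → Fin d → ℤ) (i₀ : Fin (p+1))
    (hw0 : w 0 = -(x i₀)) (hwdig : ∀ k, k < n₁ → aw k ∈ L)
    (hwrec : ∀ k, k < n₁ → w (k+1) = sigmaL R (aw k) (w k)) :
    ∃ lam : ℕ → Fin d → ℝ, ∃ a : ℕ → Fin d → ℤ,
      lam (P + n₁) = w n₁ ∧
      (∀ j, j < P + n₁ → a j ∈ L) ∧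
      (∀ j, j < P + n₁ → lam (j+1) = sigmaL R (a j) (lam j)) ∧
      (∀ j, j ≤ P → lam j = -(x (i₀ + (P : Fin (p+1)) - ((j : ℕ) : Fin (p+1))))) := by
  classical
  set e : Fin (p+1) := i₀ + (P : Fin (p+1)) with he
  refine ⟨fun j => if j < P then -(x (e - ((j : ℕ) : Fin (p+1)))) else w (j - P),
    fun j => if j < P then l (e - ((j : ℕ) : Fin (p+1)) - 1) else aw (j - P), ?_, ?_, ?_, ?_⟩
  · have h1 : ¬ (P + n₁ < P) := by omega
    simp only [h1, if_false]
    have h2 : P + n₁ - P = n₁ := by omega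
    rw [h2]
  · intro j hj
    by_cases hjP : j < P
    · simp only [hjP, if_true]; exact hl _
    · simp only [hjP, if_false]
      exact hwdig _ (by omega)
  · intro j hj
    beta_reduce
    have hle : ∀ j', j' ≤ P → (if j' < P then -(x (e - ((j' : ℕ) : Fin (p+1)))) else w (j' - P))
        = -(x (e - ((j' : ℕ) : Fin (p+1)))) := by
      intro j' hj'
      by_cases h : j' < P
      · simp only [h, if_true]
      · have hjP : j' = P := by omega
        subst hjP
        simp only [h, if_false]
        rw [Nat.sub_self, hw0]
        congr 2
        rw [he, add_sub_cancel_right]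
    by_cases hjP : j < P
    · have h1 : j + 1 ≤ P := by omega
      rw [hle j (by omega), hle (j+1) h1]
      simp only [hjP, if_true]
      have hcast : ((j + 1 : ℕ) : Fin (p+1)) = ((j : ℕ) : Fin (p+1)) + 1 := by
        push_cast
        ring
      rw [hcast]
      have h2 := hstep (e - ((j : ℕ) : Fin (p+1)) - 1)
      rw [sub_add_cancel] at h2
      rw [h2]
      congr 2
      rw [sub_sub]
    · have h2 : ¬ (j + 1 < P) := by omega
      simp only [hjP, h2, if_false]
      have h4 : j + 1 - P = (j - P) + 1 := by omega
      rw [h4]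
      exact hwrec _ (by omega)
  · intro j hj
    beta_reduce
    by_cases h : j < P
    · simp only [h, if_true]
    · have hjP : j = P := by omega
      subst hjP
      simp only [h, if_false]
      rw [Nat.sub_self, hw0]
      congr 2
      rw [he, add_sub_cancel_right]

lemma inner_E_eq {d : ℕ} (μ : Measure (Fin d → ℝ)) [IsProbabilityMeasure μ]
    (E : (Fin d → ℝ) → Lp ℂ 2 μ)
    (hE : ∀ t : Fin d → ℝ, (E t : (Fin d → ℝ) → ℂ) =ᵐ[μ] fun x => expv t x)
    (u v : Fin d → ℝ) :
    (inner ℂ (E u) (E v) : ℂ) = ∫ x, expv (v - u) x ∂μ := by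
  rw [MeasureTheory.L2.inner_def]
  apply integral_congr_ae
  filter_upwards [hE u, hE v] with a h1 h2
  rw [h1, h2, RCLike.inner_apply, expv_conj, ← expv_add_fst]
  congr 1


theorem stmt11
    (d N : ℕ) (R : Matrix (Fin d) (Fin d) ℤ) (hRexp : Expansive R)
    (B : Finset (Fin d → ℤ)) (hB0 : (0 : Fin d → ℤ) ∈ B) (hBcard : B.card = N)
    (X : Set (Fin d → ℝ)) (hXc : IsCompact X) (hXne : X.Nonempty)
    (hX : X = ⋃ b ∈ B, tauB R b '' X)
    (μ : Measure (Fin d → ℝ)) [IsProbabilityMeasure μ]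
    (hμinv : μ = (N : ENNReal)⁻¹ • ∑ b ∈ B, μ.map (tauB R b))
    (hμsupp : μ Xᶜ = 0)
    (hnooverlap : ∀ b ∈ B, ∀ b' ∈ B, b ≠ b' →
      μ (tauB R b '' X ∩ tauB R b' '' X) = 0)
    (L : Finset (Fin d → ℤ)) (hL0 : (0 : Fin d → ℤ) ∈ L) (hLcard : L.card = N)
    (hHad : IsHadamardPair R B L)
    (hreg : ∃ v : Fin d → (Fin d → ℝ), (∀ i, v i ∈ GammaBSet R B) ∧
      LinearIndependent ℝ v)
    (E : (Fin d → ℝ) → Lp ℂ 2 μ)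
    (hE : ∀ t : Fin d → ℝ, (E t : (Fin d → ℝ) → ℂ) =ᵐ[μ] fun x => expv t x)
    (C₁ C₂ : Set (Fin d → ℝ))
    (hC₁ : IsLCycle R L C₁) (hC₁ext : BExtreme B C₁)
    (hC₂ : IsLCycle R L C₂) (hC₂ext : BExtreme B C₂)
    (hne : C₁ ≠ C₂) :
    ∀ f ∈ HCyc E R L C₁, ∀ g ∈ HCyc E R L C₂, (inner ℂ f g : ℂ) = 0 := by
  classical
  set S := (Rmat R).transpose with hS
  have hNpos : 0 < N := by
    rw [← hBcard]; exact Finset.card_pos.mpr ⟨0, hB0⟩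
  have hRdet : (Rmat R).det ≠ 0 := det_Rmat_ne_zero R hRexp
  have hSdet : IsUnit S.det := by
    rw [hS, Matrix.det_transpose]
    exact Ne.isUnit hRdet
  have hscale : ∀ s : Fin d → ℝ,
      (∫ x, expv (S.mulVec s) x ∂μ) = chiB B s * ∫ x, expv s x ∂μ :=
    fun s => Fh_scale R B hBcard μ hμinv hSdet s
  -- the key vanishing statement
  have hkey : ∀ lam1 ∈ LambdaC R L C₁, ∀ lam2 ∈ LambdaC R L C₂,
      (∫ x, expv (lam2 - lam1) x ∂μ) = 0 := by
    intro lam1 hlam1 lam2 hlam2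
    obtain ⟨p₁, x₁, l₁, hinj₁, hl₁, hcyc₁, hC₁eq⟩ := hC₁
    obtain ⟨p₂, x₂, l₂, hinj₂, hl₂, hcyc₂, hC₂eq⟩ := hC₂
    -- basic cycle facts
    have hSkey₁ : ∀ i, S.mulVec (x₁ (i+1)) = x₁ i + vecR (l₁ i) := by
      intro i
      have h := hcyc₁ i
      rw [tauL] at h
      have h2 := congrArg (S.mulVec) h
      rw [Matrix.mulVec_mulVec, Matrix.mul_nonsing_inv _ hSdet, Matrix.one_mulVec] at h2
      rw [← h2]
    have hSkey₂ : ∀ i, S.mulVec (x₂ (i+1)) = x₂ i + vecR (l₂ i) := by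
      intro i
      have h := hcyc₂ i
      rw [tauL] at h
      have h2 := congrArg (S.mulVec) h
      rw [Matrix.mulVec_mulVec, Matrix.mul_nonsing_inv _ hSdet, Matrix.one_mulVec] at h2
      rw [← h2]
    have hstep₁ : ∀ i, sigmaL R (l₁ i) (-(x₁ (i+1))) = -(x₁ i) := by
      intro i
      rw [sigmaL, Matrix.mulVec_neg, ← hS, hSkey₁ i]
      abel
    have hstep₂ : ∀ i, sigmaL R (l₂ i) (-(x₂ (i+1))) = -(x₂ i) := by
      intro i
      rw [sigmaL, Matrix.mulVec_neg, ← hS, hSkey₂ i]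
      abel
    have hext₁ : ∀ i, ∀ b ∈ B, ∃ z : ℤ, dotProduct (vecR b) (x₁ i) = (z : ℝ) := by
      intro i b hb
      have hx : x₁ i ∈ C₁ := by rw [hC₁eq]; exact Set.mem_range_self i
      have h1 := chi_align B hB0 (x₁ i) (hC₁ext (x₁ i) hx) b hb
      exact expv_eq_one_int _ _ h1
    have hext₂ : ∀ i, ∀ b ∈ B, ∃ z : ℤ, dotProduct (vecR b) (x₂ i) = (z : ℝ) := by
      intro i b hb
      have hx : x₂ i ∈ C₂ := by rw [hC₂eq]; exact Set.mem_range_self i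
      have h1 := chi_align B hB0 (x₂ i) (hC₂ext (x₂ i) hx) b hb
      exact expv_eq_one_int _ _ h1
    -- representations
    obtain ⟨n₁, w₁, aw₁, ⟨c₁, hc₁C, hw₁0⟩, hw₁dig, hw₁rec, hw₁n⟩ :=
      lambda_rep R L C₁ lam1 hlam1
    obtain ⟨n₂, w₂, aw₂, ⟨c₂, hc₂C, hw₂0⟩, hw₂dig, hw₂rec, hw₂n⟩ :=
      lambda_rep R L C₂ lam2 hlam2
    obtain ⟨i₀₁, hi₀₁⟩ : ∃ i, x₁ i = c₁ := by rw [hC₁eq] at hc₁C; exact hc₁C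
    obtain ⟨i₀₂, hi₀₂⟩ : ∃ i, x₂ i = c₂ := by rw [hC₂eq] at hc₂C; exact hc₂C
    have hw₁0' : w₁ 0 = -(x₁ i₀₁) := by rw [hw₁0, hi₀₁]
    have hw₂0' : w₂ 0 = -(x₂ i₀₂) := by rw [hw₂0, hi₀₂]
    -- parameters
    set P : ℕ := (p₁+1)*(p₂+1) + p₁ + p₂ + 1 with hP
    set n : ℕ := max n₁ n₂ + P with hn
    set P₁ : ℕ := n - n₁ with hP₁
    set P₂ : ℕ := n - n₂ with hP₂
    have hPP₁ : P ≤ P₁ := by omega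
    have hPP₂ : P ≤ P₂ := by omega
    have hP₁n : P₁ + n₁ = n := by omega
    have hP₂n : P₂ + n₂ = n := by omega
    -- chains
    obtain ⟨lam, a, hlamn, hadig, harec, hlamlow⟩ :=
      chain_build R L x₁ l₁ hl₁ hstep₁ P₁ n₁ w₁ aw₁ i₀₁ hw₁0' hw₁dig hw₁rec
    obtain ⟨lam', a', hlamn', hadig', harec', hlamlow'⟩ :=
      chain_build R L x₂ l₂ hl₂ hstep₂ P₂ n₂ w₂ aw₂ i₀₂ hw₂0' hw₂dig hw₂rec
    rw [hP₁n] at hlamn hadig harec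
    rw [hP₂n] at hlamn' hadig' harec'
    rw [hw₁n] at hlamn
    rw [hw₂n] at hlamn'
    set e₁ : Fin (p₁+1) := i₀₁ + (P₁ : Fin (p₁+1)) with he₁
    set e₂ : Fin (p₂+1) := i₀₂ + (P₂ : Fin (p₂+1)) with he₂
    -- integrality along the chains
    have hbase : ∀ b ∈ B, ∀ k : ℕ, ∃ z : ℤ,
        dotProduct (vecR b) ((S ^ k).mulVec (lam 0)) = (z : ℝ) := by
      intro b hb k
      have h0 : lam 0 = -(x₁ e₁) := by
        have := hlamlow 0 (by omega)
        simpa using this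
      obtain ⟨z, hz⟩ := cycle_dot_int R B x₁ l₁ hSkey₁ hext₁ k e₁ b hb
      refine ⟨-z, ?_⟩
      rw [h0, Matrix.mulVec_neg, dotProduct_neg, hz]
      push_cast
      ring
    have hbase' : ∀ b ∈ B, ∀ k : ℕ, ∃ z : ℤ,
        dotProduct (vecR b) ((S ^ k).mulVec (lam' 0)) = (z : ℝ) := by
      intro b hb k
      have h0 : lam' 0 = -(x₂ e₂) := by
        have := hlamlow' 0 (by omega)
        simpa using this
      obtain ⟨z, hz⟩ := cycle_dot_int R B x₂ l₂ hSkey₂ hext₂ k e₂ b hb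
      refine ⟨-z, ?_⟩
      rw [h0, Matrix.mulVec_neg, dotProduct_neg, hz]
      push_cast
      ring
    have hdint : ∀ j, j ≤ n → ∀ b ∈ B, ∃ z : ℤ,
        dotProduct (vecR b) (lam j) = (z : ℝ) :=
      chain_dot_int0 R B lam a n harec hbase
    have hdint' : ∀ j, j ≤ n → ∀ b ∈ B, ∃ z : ℤ,
        dotProduct (vecR b) (lam' j) = (z : ℝ) :=
      chain_dot_int0 R B lam' a' n harec' hbase'
    -- main dichotomy
    by_cases halleq : ∀ j, j < n → a j = a' j
    · -- all digits equal ⇒ C₁ = C₂, contradiction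
      exfalso
      have hSrel : ∀ j, j < n → lam' (j+1) - lam (j+1) = S.mulVec (lam' j - lam j) := by
        intro j hj
        rw [harec j hj, harec' j hj, sigmaL, sigmaL, ← halleq j hj, ← hS, Matrix.mulVec_sub]
        abel
      have hpow : ∀ j, j ≤ n → lam' j - lam j = (S ^ j).mulVec (lam' 0 - lam 0) := by
        intro j
        induction j with
        | zero => intro _; rw [pow_zero, Matrix.one_mulVec]
        | succ j ih =>
          intro hj
          rw [hSrel j (by omega), ih (by omega), Matrix.mulVec_mulVec, ← pow_succ']
      have ht0 : lam' 0 - lam 0 = 0 := by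
        by_contra ht0ne
        -- pigeonhole
        set Pmin : ℕ := min P₁ P₂ with hPmin
        have hPm : P ≤ Pmin := le_min hPP₁ hPP₂
        have hcard : (Finset.univ : Finset (Fin (p₁+1) × Fin (p₂+1))).card
            < (Finset.range (Pmin + 1)).card := by
          rw [Finset.card_univ, Fintype.card_prod, Fintype.card_fin, Fintype.card_fin,
            Finset.card_range]
          omega
        obtain ⟨j₁, hj₁, j₂, hj₂, hjne, hjeq⟩ :=
          Finset.exists_ne_map_eq_of_card_lt_of_maps_to hcard
            (f := fun j => ((e₁ - ((j : ℕ) : Fin (p₁+1)), e₂ - ((j : ℕ) : Fin (p₂+1)))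
              : Fin (p₁+1) × Fin (p₂+1)))
            (fun j _ => Finset.mem_univ _)
        rw [Finset.mem_range] at hj₁ hj₂
        -- wlog j₁ < j₂
        rcases Nat.lt_or_ge j₁ j₂ with hlt | hge
        case _ =>
          have hteq : lam' j₁ - lam j₁ = lam' j₂ - lam j₂ := by
            have hl1 : lam j₁ = -(x₁ (e₁ - ((j₁ : ℕ) : Fin (p₁+1)))) :=
              hlamlow j₁ (by omega)
            have hl2 : lam j₂ = -(x₁ (e₁ - ((j₂ : ℕ) : Fin (p₁+1)))) :=
              hlamlow j₂ (by omega)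
            have hl1' : lam' j₁ = -(x₂ (e₂ - ((j₁ : ℕ) : Fin (p₂+1)))) :=
              hlamlow' j₁ (by omega)
            have hl2' : lam' j₂ = -(x₂ (e₂ - ((j₂ : ℕ) : Fin (p₂+1)))) :=
              hlamlow' j₂ (by omega)
            have hfst := congrArg Prod.fst hjeq
            have hsnd := congrArg Prod.snd hjeq
            simp only at hfst hsnd
            rw [hl1, hl2, hl1', hl2', hfst, hsnd]
          rw [hpow j₁ (by omega), hpow j₂ (by omega)] at hteq
          set v : Fin d → ℝ := (S ^ j₁).mulVec (lam' 0 - lam 0) with hv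
          have hvne : v ≠ 0 := by
            intro hv0
            apply ht0ne
            have hdet : IsUnit ((S ^ j₁).det) := by
              rw [Matrix.det_pow]
              exact hSdet.pow j₁
            have := congrArg ((S ^ j₁)⁻¹.mulVec) hv0
            rw [Matrix.mulVec_mulVec, Matrix.nonsing_inv_mul _ hdet, Matrix.one_mulVec,
              Matrix.mulVec_zero] at this
            exact this
          have hδ : (S ^ (j₂ - j₁)).mulVec v = v := by
            rw [hv, Matrix.mulVec_mulVec, ← pow_add]
            have : j₂ - j₁ + j₁ = j₂ := by omega
            rw [this, ← hteq]
          exact no_unit_eigen R hRexp (j₂ - j₁) (by omega) v hvne hδ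
        case _ =>
          have hlt : j₂ < j₁ := by omega
          have hteq : lam' j₂ - lam j₂ = lam' j₁ - lam j₁ := by
            have hl1 : lam j₁ = -(x₁ (e₁ - ((j₁ : ℕ) : Fin (p₁+1)))) :=
              hlamlow j₁ (by omega)
            have hl2 : lam j₂ = -(x₁ (e₁ - ((j₂ : ℕ) : Fin (p₁+1)))) :=
              hlamlow j₂ (by omega)
            have hl1' : lam' j₁ = -(x₂ (e₂ - ((j₁ : ℕ) : Fin (p₂+1)))) :=
              hlamlow' j₁ (by omega)
            have hl2' : lam' j₂ = -(x₂ (e₂ - ((j₂ : ℕ) : Fin (p₂+1)))) :=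
              hlamlow' j₂ (by omega)
            have hfst := congrArg Prod.fst hjeq
            have hsnd := congrArg Prod.snd hjeq
            simp only at hfst hsnd
            rw [hl1, hl2, hl1', hl2', hfst, hsnd]
          rw [hpow j₁ (by omega), hpow j₂ (by omega)] at hteq
          set v : Fin d → ℝ := (S ^ j₂).mulVec (lam' 0 - lam 0) with hv
          have hvne : v ≠ 0 := by
            intro hv0
            apply ht0ne
            have hdet : IsUnit ((S ^ j₂).det) := by
              rw [Matrix.det_pow]
              exact hSdet.pow j₂
            have := congrArg ((S ^ j₂)⁻¹.mulVec) hv0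
            rw [Matrix.mulVec_mulVec, Matrix.nonsing_inv_mul _ hdet, Matrix.one_mulVec,
              Matrix.mulVec_zero] at this
            exact this
          have hδ : (S ^ (j₁ - j₂)).mulVec v = v := by
            rw [hv, Matrix.mulVec_mulVec, ← pow_add]
            have : j₁ - j₂ + j₂ = j₁ := by omega
            rw [this, ← hteq]
          exact no_unit_eigen R hRexp (j₁ - j₂) (by omega) v hvne hδ
      -- chains coincide
      have hall : ∀ j, j ≤ n → lam j = lam' j := by
        intro j
        induction j with
        | zero =>
          intro _
          have := sub_eq_zero.mp ht0
          exact this.symm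
        | succ j ih =>
          intro hj
          rw [harec j (by omega), harec' j (by omega), halleq j (by omega), ih (by omega)]
      -- conclude C₁ = C₂
      apply hne
      rw [hC₁eq, hC₂eq]
      apply Set.eq_of_subset_of_subset
      · rintro y ⟨i, rfl⟩
        set j : ℕ := ((e₁ - i : Fin (p₁+1)) : ℕ) with hj
        have hjp : j ≤ p₁ := by
          have := (e₁ - i).isLt
          omega
        have hjP₁ : j ≤ P₁ := by omega
        have hjP₂ : j ≤ P₂ := by omega
        have hl1 : lam j = -(x₁ (e₁ - ((j : ℕ) : Fin (p₁+1)))) := hlamlow j hjP₁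
        have hl2 : lam' j = -(x₂ (e₂ - ((j : ℕ) : Fin (p₂+1)))) := hlamlow' j hjP₂
        have hcast : ((j : ℕ) : Fin (p₁+1)) = e₁ - i := by
          rw [hj, Fin.cast_val_eq_self]
        rw [hcast, sub_sub_cancel] at hl1
        have heqj : lam j = lam' j := hall j (by omega)
        rw [hl1, hl2] at heqj
        have : x₁ i = x₂ (e₂ - ((j : ℕ) : Fin (p₂+1))) := by
          have := congrArg Neg.neg heqj
          simpa using this
        rw [this]
        exact Set.mem_range_self _
      · rintro y ⟨i, rfl⟩
        set j : ℕ := ((e₂ - i : Fin (p₂+1)) : ℕ) with hj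
        have hjp : j ≤ p₂ := by
          have := (e₂ - i).isLt
          omega
        have hjP₁ : j ≤ P₁ := by omega
        have hjP₂ : j ≤ P₂ := by omega
        have hl1 : lam j = -(x₁ (e₁ - ((j : ℕ) : Fin (p₁+1)))) := hlamlow j hjP₁
        have hl2 : lam' j = -(x₂ (e₂ - ((j : ℕ) : Fin (p₂+1)))) := hlamlow' j hjP₂
        have hcast : ((j : ℕ) : Fin (p₂+1)) = e₂ - i := by
          rw [hj, Fin.cast_val_eq_self]
        rw [hcast, sub_sub_cancel] at hl2
        have heqj : lam j = lam' j := hall j (by omega)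
        rw [hl1, hl2] at heqj
        have : x₂ i = x₁ (e₁ - ((j : ℕ) : Fin (p₁+1))) := by
          have := congrArg Neg.neg heqj
          simpa using this.symm
        rw [this]
        exact Set.mem_range_self _
    · -- some digit differs: the integral vanishes
      push_neg at halleq
      obtain ⟨j₀, hj₀n, hj₀ne⟩ := halleq
      set Jset : Finset ℕ := (Finset.range n).filter (fun j => a j ≠ a' j) with hJset
      have hJne : Jset.Nonempty := ⟨j₀, by
        rw [hJset, Finset.mem_filter, Finset.mem_range]
        exact ⟨hj₀n, hj₀ne⟩⟩
      set jstar : ℕ := Jset.max' hJne with hjstar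
      have hjmem : jstar ∈ Jset := Finset.max'_mem _ _
      rw [hJset, Finset.mem_filter, Finset.mem_range] at hjmem
      obtain ⟨hjsn, hjsne⟩ := hjmem
      have habove : ∀ i, jstar < i → i < n → a i = a' i := by
        intro i hi hin
        by_contra hcon
        have : i ∈ Jset := by
          rw [hJset, Finset.mem_filter, Finset.mem_range]
          exact ⟨hin, hcon⟩
        have := Finset.le_max' Jset i this
        omega
      -- the vanishing factor
      have hzero : (∫ x, expv (lam' (jstar+1) - lam (jstar+1)) x ∂μ) = 0 := by
        set mdiff : Fin d → ℝ := vecR (a' jstar) - vecR (a jstar) with hmdiff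
        set y : Fin d → ℝ := S⁻¹.mulVec mdiff with hy
        have hSy : S.mulVec y = mdiff := by
          rw [hy, Matrix.mulVec_mulVec, Matrix.mul_nonsing_inv _ hSdet, Matrix.one_mulVec]
        have hdiff : lam' (jstar+1) - lam (jstar+1)
            = S.mulVec ((lam' jstar - lam jstar) + y) := by
          rw [harec jstar hjsn, harec' jstar hjsn, sigmaL, sigmaL, ← hS,
            Matrix.mulVec_add, hSy, Matrix.mulVec_sub, hmdiff]
          abel
        rw [hdiff, hscale]
        have htrans : chiB B ((lam' jstar - lam jstar) + y) = chiB B y := by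
          apply chiB_translate
          intro b hb
          obtain ⟨z1, hz1⟩ := hdint jstar (by omega) b hb
          obtain ⟨z2, hz2⟩ := hdint' jstar (by omega) b hb
          refine ⟨z2 - z1, ?_⟩
          rw [dotProduct_sub, hz1, hz2]
          push_cast
          ring
        rw [htrans]
        have hchiy : chiB B y = 0 := by
          rw [hy, hmdiff]
          exact chi_had R B L hBcard hNpos hHad (hadig jstar hjsn) (hadig' jstar hjsn) hjsne
        rw [hchiy, zero_mul]
      -- propagate upward
      have hup : ∀ k, jstar + 1 ≤ k → k ≤ n →
          (∫ x, expv (lam' k - lam k) x ∂μ) = 0 := by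
        intro k hk
        induction k, hk using Nat.le_induction with
        | base => intro _; exact hzero
        | succ k hk ih =>
          intro hkn
          have hkn' : k < n := by omega
          have hrelk : lam' (k+1) - lam (k+1) = S.mulVec (lam' k - lam k) := by
            rw [harec k hkn', harec' k hkn', sigmaL, sigmaL,
              habove k (by omega) hkn', ← hS, Matrix.mulVec_sub]
            abel
          rw [hrelk, hscale, ih (by omega), mul_zero]
      have hfin := hup n (by omega) le_rfl
      rw [hlamn, hlamn'] at hfin
      exact hfin
  -- assemble
  intro f hf g hg
  have h0 : ∀ x ∈ {g : Lp ℂ 2 μ | ∃ lam ∈ LambdaC R L C₁, g = E lam},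
      ∀ y ∈ {g : Lp ℂ 2 μ | ∃ lam ∈ LambdaC R L C₂, g = E lam}, (inner ℂ x y : ℂ) = 0 := by
    rintro x ⟨lam1, hlam1, rfl⟩ y ⟨lam2, hlam2, rfl⟩
    rw [inner_E_eq μ E hE]
    exact hkey lam1 hlam1 lam2 hlam2
  exact ortho_closure _ _ h0 f hf g hg
end
end

section
/- Assume (B,L) is a Hadamard pair. Then: (i) the closure of any L-invariant set is L-invariant; (ii) every B-extreme L-cycle is an L-invariant set; (iii) for any minimal closed L-invariant set M and any x ∈ M, M equals the closure of the orbit O(x), and M is contained in the attractor X_L of the IFS (τ_l)_{l∈L}; (iv) the family of minimal closed L-invariant sets is finite, its members are pairwise separated, and it is complete. -/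
open Complex Filter Topology

set_option linter.unusedSectionVars false
set_option maxHeartbeats 1000000
noncomputable section

/-- `M` is `L`-invariant: possible transitions starting in `M` stay in `M`. -/
def LInvariant {d : ℕ} (R : Matrix (Fin d) (Fin d) ℤ) (B L : Finset (Fin d → ℤ))
    (M : Set (Fin d → ℝ)) : Prop :=
  ∀ x ∈ M, ∀ l ∈ L, chiB B (tauL R l x) ≠ 0 → tauL R l x ∈ M

/-- The orbit `O(x)`: all points reachable from `x` by finitely many possible
transitions. -/
def orbitO {d : ℕ} (R : Matrix (Fin d) (Fin d) ℤ) (B L : Finset (Fin d → ℤ))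
    (x : Fin d → ℝ) : Set (Fin d → ℝ) :=
  {y | ∃ n : ℕ, ∃ z : Fin (n + 1) → (Fin d → ℝ), z 0 = x ∧ z (Fin.last n) = y ∧
    ∀ i : Fin n, ∃ l ∈ L,
      tauL R l (z i.castSucc) = z i.succ ∧ chiB B (z i.succ) ≠ 0}

/-- A minimal (nonempty) closed `L`-invariant set. -/
def IsMinimalInv {d : ℕ} (R : Matrix (Fin d) (Fin d) ℤ) (B L : Finset (Fin d → ℤ))
    (M : Set (Fin d → ℝ)) : Prop :=
  M.Nonempty ∧ IsClosed M ∧ LInvariant R B L M ∧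
    ∀ M' ⊆ M, M'.Nonempty → IsClosed M' → LInvariant R B L M' → M' = M

/-- Two sets are separated when they are at positive `dist'`-distance. -/
def SepSets {d : ℕ} (dist' : (Fin d → ℝ) → (Fin d → ℝ) → ℝ)
    (M₁ M₂ : Set (Fin d → ℝ)) : Prop :=
  ∃ δ > 0, ∀ x ∈ M₁, ∀ y ∈ M₂, δ ≤ dist' x y


lemma abs_expv (t x : Fin d → ℝ) : ‖expv t x‖ = 1 := by
  simp [expv, Complex.norm_exp]

lemma expv_mul_conj_self (t x : Fin d → ℝ) :
    expv t x * (starRingEnd ℂ) (expv t x) = 1 := by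
  rw [Complex.mul_conj]
  norm_cast
  rw [Complex.normSq_eq_norm_sq, abs_expv]; norm_num

lemma expv_add (t x y : Fin d → ℝ) : expv t (x + y) = expv t x * expv t y := by
  rw [expv, expv, expv, ← Complex.exp_add]
  congr 1
  have : ∑ i, t i * (x + y) i = (∑ i, t i * x i) + ∑ i, t i * y i := by
    rw [← Finset.sum_add_distrib]; congr 1; ext i; simp [Pi.add_apply]; ring
  rw [this]; push_cast; ring

lemma conj_expv (t x : Fin d → ℝ) :
    (starRingEnd ℂ) (expv t x) = expv t (-x) := by
  have hs : ∑ i, t i * (-x) i = -∑ i, t i * x i := by simp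
  rw [expv, expv, ← Complex.exp_conj, hs]
  congr 1
  simp only [map_mul, Complex.conj_I, Complex.conj_ofReal, map_ofNat]
  push_cast
  ring

lemma continuous_expv (t : Fin d → ℝ) : Continuous fun x => expv t x := by
  unfold expv
  apply Complex.continuous_exp.comp
  apply Continuous.mul continuous_const
  exact Complex.continuous_ofReal.comp (by continuity)

lemma continuous_tauL (R : Matrix (Fin d) (Fin d) ℤ) (l : Fin d → ℤ) :
    Continuous (tauL R l) := by
  unfold tauL
  have h1 : Continuous fun x : Fin d → ℝ => x + vecR l := by continuity
  have h2 : Continuous fun v : Fin d → ℝ =>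
      ((Rmat R).transpose)⁻¹.mulVec v :=
    LinearMap.continuous_of_finiteDimensional
      (Matrix.mulVecLin ((Rmat R).transpose)⁻¹)
  exact h2.comp h1

lemma continuous_chiB (B : Finset (Fin d → ℤ)) : Continuous (chiB B) := by
  unfold chiB
  exact continuous_const.mul (continuous_finset_sum _ fun b _ => continuous_expv _)

variable {d : ℕ} {dist' : (Fin d → ℝ) → (Fin d → ℝ) → ℝ}

section Dist

variable (hd0 : ∀ x y, dist' x y = 0 ↔ x = y)
  (hdsymm : ∀ x y, dist' x y = dist' y x)
  (hdtri : ∀ x y z, dist' x z ≤ dist' x y + dist' y z)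
  (hdtop : ∀ s : Set (Fin d → ℝ),
      IsOpen s ↔ ∀ x ∈ s, ∃ ε > 0, ∀ y, dist' x y < ε → y ∈ s)

include hd0 in
lemma dist'_self (x : Fin d → ℝ) : dist' x x = 0 := (hd0 x x).mpr rfl

include hd0 hdsymm hdtri in
lemma dist'_nonneg (x y : Fin d → ℝ) : 0 ≤ dist' x y := by
  have h := hdtri x y x
  rw [dist'_self hd0, hdsymm y x] at h
  linarith

include hdtri hdtop in
lemma ball_isOpen (x : Fin d → ℝ) (ε : ℝ) :
    IsOpen {y | dist' x y < ε} := by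
  rw [hdtop]
  intro z hz
  refine ⟨ε - dist' x z, by simpa using hz, fun y hy => ?_⟩
  have := hdtri x z y
  simp only [Set.mem_setOf_eq] at *
  linarith

include hd0 hdtri hdtop in
lemma ball_mem_nhds (x : Fin d → ℝ) {ε : ℝ} (hε : 0 < ε) :
    {y | dist' x y < ε} ∈ 𝓝 x :=
  (ball_isOpen hdtri hdtop x ε).mem_nhds (by simp [dist'_self hd0, hε])

include hdtop in
lemma exists_ball_subset {U : Set (Fin d → ℝ)} (hU : IsOpen U) {x : Fin d → ℝ}
    (hx : x ∈ U) : ∃ ε > 0, ∀ y, dist' x y < ε → y ∈ U :=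
  (hdtop U).mp hU x hx

include hd0 hdsymm hdtri hdtop in
lemma tendsto_of_dist' {ι : Type*} {u : ι → (Fin d → ℝ)} {l : Filter ι}
    {w : Fin d → ℝ} (h : Tendsto (fun i => dist' w (u i)) l (𝓝 0)) :
    Tendsto u l (𝓝 w) := by
  rw [tendsto_nhds]
  intro U hU hwU
  obtain ⟨ε, hε, hball⟩ := exists_ball_subset hdtop hU hwU
  have := (Metric.tendsto_nhds.mp h) ε hε
  filter_upwards [this] with i hi
  apply hball
  rw [Real.dist_eq, sub_zero] at hi
  calc dist' w (u i) ≤ |dist' w (u i)| := le_abs_self _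
    _ < ε := hi

include hd0 hdsymm hdtri hdtop in
lemma continuous_dist'_right (x : Fin d → ℝ) :
    Continuous fun y => dist' x y := by
  rw [continuous_iff_continuousAt]
  intro y₀
  rw [ContinuousAt, Metric.tendsto_nhds]
  intro ε hε
  filter_upwards [ball_mem_nhds hd0 hdtri hdtop y₀ hε] with y hy
  rw [Real.dist_eq, abs_sub_lt_iff]
  have h1 := hdtri x y₀ y
  have h2 := hdtri x y y₀
  have h3 := hdsymm y y₀
  constructor <;> linarith

include hd0 hdsymm hdtri hdtop in
lemma continuous_dist'_prod :
    Continuous fun p : (Fin d → ℝ) × (Fin d → ℝ) => dist' p.1 p.2 := by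
  rw [continuous_iff_continuousAt]
  intro p₀
  rw [ContinuousAt, Metric.tendsto_nhds]
  intro ε hε
  have hmem : {y | dist' p₀.1 y < ε/2} ×ˢ {y | dist' p₀.2 y < ε/2} ∈ 𝓝 p₀ := by
    rw [nhds_prod_eq]
    exact Filter.prod_mem_prod (ball_mem_nhds hd0 hdtri hdtop _ (by linarith))
      (ball_mem_nhds hd0 hdtri hdtop _ (by linarith))
  filter_upwards [hmem] with p hp
  obtain ⟨h1, h2⟩ := hp
  simp only [Set.mem_setOf_eq] at h1 h2
  rw [Real.dist_eq, abs_sub_lt_iff]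
  have t1 := hdtri p.1 p₀.1 p₀.2
  have t2 := hdtri p₀.1 p₀.2 p.2
  have t3 := hdtri p₀.1 p.1 p.2
  have t4 := hdtri p.1 p.2 p₀.2
  have s1 := hdsymm p₀.1 p.1
  have s2 := hdsymm p₀.2 p.2
  constructor <;> linarith [hdtri p.1 p₀.1 p.2, hdtri p₀.1 p.1 p₀.2,
    hdtri p.1 p.2 p₀.2, hdtri p₀.1 p₀.2 p.2, hdtri p.2 p₀.2 p₀.1,
    hdtri p₀.2 p.2 p.1]

include hd0 hdsymm hdtri hdtop in
lemma mem_closure_iff_dist' {M : Set (Fin d → ℝ)} {x : Fin d → ℝ} :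
    x ∈ closure M ↔ ∀ ε > 0, ∃ m ∈ M, dist' x m < ε := by
  constructor
  · intro hx ε hε
    obtain ⟨m, hm1, hm2⟩ := mem_closure_iff.mp hx _ (ball_isOpen hdtri hdtop x ε)
      (by simp [dist'_self hd0, hε])
    exact ⟨m, hm2, hm1⟩
  · intro h
    rw [mem_closure_iff]
    intro U hU hxU
    obtain ⟨ε, hε, hball⟩ := exists_ball_subset hdtop hU hxU
    obtain ⟨m, hm, hdm⟩ := h ε hε
    exact ⟨m, hball m hdm, hm⟩

end Dist

section ChunkC
variable {d : ℕ}

lemma dot_inv_transpose (A : Matrix (Fin d) (Fin d) ℝ) (b v : Fin d → ℝ) :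
    ∑ i, b i * ((A.transpose)⁻¹.mulVec v) i = ∑ i, ((A⁻¹).mulVec b) i * v i := by
  show dotProduct b ((A.transpose)⁻¹.mulVec v) = dotProduct ((A⁻¹).mulVec b) v
  rw [Matrix.dotProduct_mulVec, ← Matrix.transpose_nonsing_inv, Matrix.vecMul_transpose]

lemma expv_tauL (R : Matrix (Fin d) (Fin d) ℤ) (b l : Fin d → ℤ) (x : Fin d → ℝ) :
    expv (vecR b) (tauL R l x) = expv ((Rmat R)⁻¹.mulVec (vecR b)) (x + vecR l) := by
  unfold expv tauL
  congr 2
  exact_mod_cast congrArg Complex.ofReal (dot_inv_transpose (Rmat R) (vecR b) (x + vecR l))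

variable {R : Matrix (Fin d) (Fin d) ℤ} {B L : Finset (Fin d → ℤ)}

variable {R : Matrix (Fin d) (Fin d) ℤ} {B L : Finset (Fin d → ℤ)}

lemma card_ne_zero (hB0 : (0 : Fin d → ℤ) ∈ B) : (B.card : ℂ) ≠ 0 := by
  have : B.Nonempty := ⟨0, hB0⟩
  simp [Finset.card_ne_zero_of_mem hB0]

lemma had_entry (hHad : IsHadamardPair R B L) (hB0 : (0 : Fin d → ℤ) ∈ B)
    {b b' : Fin d → ℤ} (hb : b ∈ B) (hb' : b' ∈ B) :
    ∑ l ∈ L, expv ((Rmat R)⁻¹.mulVec (vecR b)) (vecR l) *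
      (starRingEnd ℂ) (expv ((Rmat R)⁻¹.mulVec (vecR b')) (vecR l)) =
    if b = b' then (B.card : ℂ) else 0 := by
  have h := congrFun (congrFun hHad.2 ⟨b, hb⟩) ⟨b', hb'⟩
  rw [Matrix.mul_apply, Matrix.one_apply] at h
  have hc : ((Real.sqrt B.card : ℝ) : ℂ)⁻¹ * (starRingEnd ℂ) ((Real.sqrt B.card : ℝ) : ℂ)⁻¹
      = ((B.card : ℝ) : ℂ)⁻¹ := by
    rw [map_inv₀, Complex.conj_ofReal, ← mul_inv]
    norm_cast
    rw [Real.mul_self_sqrt (Nat.cast_nonneg _)]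
  have h2 : ∑ l : {x // x ∈ L}, hadMat R B L ⟨b, hb⟩ l *
      (hadMat R B L).conjTranspose l ⟨b', hb'⟩
      = ((B.card : ℝ) : ℂ)⁻¹ * ∑ l : {x // x ∈ L},
        expv ((Rmat R)⁻¹.mulVec (vecR b)) (vecR (l : Fin d → ℤ)) *
        (starRingEnd ℂ) (expv ((Rmat R)⁻¹.mulVec (vecR b')) (vecR (l : Fin d → ℤ))) := by
    rw [Finset.mul_sum]
    apply Finset.sum_congr rfl
    intro l _
    rw [Matrix.conjTranspose_apply, hadMat, hadMat]
    simp only [star_def, map_mul]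
    rw [← hc]; ring
  rw [h2] at h
  have hsum : ∑ l : {x // x ∈ L},
      expv ((Rmat R)⁻¹.mulVec (vecR b)) (vecR (l : Fin d → ℤ)) *
        (starRingEnd ℂ) (expv ((Rmat R)⁻¹.mulVec (vecR b')) (vecR (l : Fin d → ℤ)))
      = ∑ l ∈ L, expv ((Rmat R)⁻¹.mulVec (vecR b)) (vecR l) *
        (starRingEnd ℂ) (expv ((Rmat R)⁻¹.mulVec (vecR b')) (vecR l)) :=
    Finset.sum_coe_sort L (fun l => expv ((Rmat R)⁻¹.mulVec (vecR b)) (vecR l) *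
      (starRingEnd ℂ) (expv ((Rmat R)⁻¹.mulVec (vecR b')) (vecR l)))
  rw [hsum] at h
  have hN : ((B.card : ℝ) : ℂ) ≠ 0 := by exact_mod_cast card_ne_zero hB0
  have := congrArg (fun z => ((B.card : ℝ) : ℂ) * z) h
  rw [← mul_assoc, mul_inv_cancel₀ hN, one_mul] at this
  rw [this]
  by_cases hbb : b = b'
  · have : (⟨b, hb⟩ : {x // x ∈ B}) = ⟨b', hb'⟩ := Subtype.ext hbb
    simp [hbb, this]
  · have : (⟨b, hb⟩ : {x // x ∈ B}) ≠ ⟨b', hb'⟩ := fun hcon => hbb (by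
      simpa using congrArg Subtype.val hcon)
    simp [hbb, this]

lemma key_identity (hHad : IsHadamardPair R B L) (hB0 : (0 : Fin d → ℤ) ∈ B)
    (x : Fin d → ℝ) :
    ∑ l ∈ L, chiB B (tauL R l x) * (starRingEnd ℂ) (chiB B (tauL R l x)) = 1 := by
  set Nc : ℂ := (B.card : ℂ) with hNc
  have hN : Nc ≠ 0 := card_ne_zero hB0
  set u : (Fin d → ℤ) → ℂ := fun b => expv ((Rmat R)⁻¹.mulVec (vecR b)) x with hu
  set v : (Fin d → ℤ) → (Fin d → ℤ) → ℂ :=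
    fun b l => expv ((Rmat R)⁻¹.mulVec (vecR b)) (vecR l) with hv
  have hchi : ∀ l, chiB B (tauL R l x) = Nc⁻¹ * ∑ b ∈ B, u b * v b l := by
    intro l
    rw [chiB]
    congr 1
    exact Finset.sum_congr rfl fun b _ => by rw [expv_tauL, expv_add]
  have hconj : ∀ l, (starRingEnd ℂ) (chiB B (tauL R l x)) =
      Nc⁻¹ * ∑ b' ∈ B, (starRingEnd ℂ) (u b') * (starRingEnd ℂ) (v b' l) := by
    intro l
    rw [hchi l, map_mul, map_sum]
    congr 1
    · rw [map_inv₀, hNc, Complex.conj_natCast]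
    · exact Finset.sum_congr rfl fun b _ => map_mul _ _ _
  have step1 : ∑ l ∈ L, chiB B (tauL R l x) * (starRingEnd ℂ) (chiB B (tauL R l x))
      = (Nc⁻¹ * Nc⁻¹) * ∑ l ∈ L, ∑ b ∈ B, ∑ b' ∈ B,
          (u b * (starRingEnd ℂ) (u b')) * (v b l * (starRingEnd ℂ) (v b' l)) := by
    rw [Finset.mul_sum]
    apply Finset.sum_congr rfl
    intro l _
    rw [hconj l, hchi l, mul_mul_mul_comm, Finset.sum_mul_sum]
    congr 1
    apply Finset.sum_congr rfl; intro b _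
    apply Finset.sum_congr rfl; intro b' _
    ring
  have step2 : ∑ l ∈ L, ∑ b ∈ B, ∑ b' ∈ B,
      (u b * (starRingEnd ℂ) (u b')) * (v b l * (starRingEnd ℂ) (v b' l))
      = ∑ b ∈ B, ∑ b' ∈ B,
        (u b * (starRingEnd ℂ) (u b')) * ∑ l ∈ L, v b l * (starRingEnd ℂ) (v b' l) := by
    rw [Finset.sum_comm]
    apply Finset.sum_congr rfl; intro b _
    rw [Finset.sum_comm]
    apply Finset.sum_congr rfl; intro b' _
    rw [Finset.mul_sum]
  have step3 : ∀ b ∈ B, ∀ b' ∈ B,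
      ∑ l ∈ L, v b l * (starRingEnd ℂ) (v b' l) = if b = b' then Nc else 0 :=
    fun b hb b' hb' => had_entry hHad hB0 hb hb'
  have step4 : ∑ b ∈ B, ∑ b' ∈ B,
      (u b * (starRingEnd ℂ) (u b')) * ∑ l ∈ L, v b l * (starRingEnd ℂ) (v b' l)
      = Nc * Nc := by
    have : ∀ b ∈ B, ∑ b' ∈ B,
        (u b * (starRingEnd ℂ) (u b')) * ∑ l ∈ L, v b l * (starRingEnd ℂ) (v b' l)
        = Nc := by
      intro b hb
      have : ∑ b' ∈ B, (u b * (starRingEnd ℂ) (u b')) *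
          (if b = b' then Nc else 0) = Nc := by
        have heq : ∀ b' ∈ B, (u b * (starRingEnd ℂ) (u b')) * (if b = b' then Nc else 0)
            = if b = b' then (u b * (starRingEnd ℂ) (u b')) * Nc else 0 := by
          intro b' _; split <;> simp
        rw [Finset.sum_congr rfl heq, Finset.sum_ite_eq B b
          (fun b' => (u b * (starRingEnd ℂ) (u b')) * Nc), if_pos hb,
          expv_mul_conj_self, one_mul]
      rw [← this]
      exact Finset.sum_congr rfl fun b' hb' => by rw [step3 b hb b' hb']
    rw [Finset.sum_congr rfl this, Finset.sum_const, nsmul_eq_mul, hNc]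
  rw [step1, step2, step4]
  field_simp

lemma sum_normSq_chiB (hHad : IsHadamardPair R B L) (hB0 : (0 : Fin d → ℤ) ∈ B)
    (x : Fin d → ℝ) :
    ∑ l ∈ L, Complex.normSq (chiB B (tauL R l x)) = 1 := by
  have h := key_identity hHad hB0 x
  rw [Finset.sum_congr rfl (fun l _ => Complex.mul_conj _)] at h
  exact_mod_cast h

lemma exists_possible (hHad : IsHadamardPair R B L) (hB0 : (0 : Fin d → ℤ) ∈ B)
    (x : Fin d → ℝ) : ∃ l ∈ L, chiB B (tauL R l x) ≠ 0 := by
  by_contra h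
  push_neg at h
  have h1 := sum_normSq_chiB hHad hB0 x
  rw [Finset.sum_eq_zero (fun l hl => by rw [h l hl]; simp)] at h1
  norm_num at h1

end ChunkC

section ChunkD
variable {d : ℕ} {R : Matrix (Fin d) (Fin d) ℤ} {B L : Finset (Fin d → ℤ)}

lemma closure_invariant {M : Set (Fin d → ℝ)} (hM : LInvariant R B L M) :
    LInvariant R B L (closure M) := by
  intro x hx l hl hchi
  rw [mem_closure_iff] at hx ⊢
  intro U hU hxU
  have hopen : IsOpen ((tauL R l) ⁻¹' U ∩ {y | chiB B (tauL R l y) ≠ 0}) := by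
    apply IsOpen.inter (hU.preimage (continuous_tauL R l))
    have : {y | chiB B (tauL R l y) ≠ 0}
        = (chiB B ∘ tauL R l) ⁻¹' {z | z ≠ 0} := rfl
    rw [this]
    exact isOpen_ne.preimage ((continuous_chiB B).comp (continuous_tauL R l))
  obtain ⟨m, hm1, hm2⟩ := hx _ hopen ⟨hxU, hchi⟩
  exact ⟨tauL R l m, hm1.1, hM m hm2 l hl hm1.2⟩

lemma cycle_invariant (hHad : IsHadamardPair R B L) (hB0 : (0 : Fin d → ℤ) ∈ B)
    {C : Set (Fin d → ℝ)} (hC : IsLCycle R L C) (hBC : BExtreme B C) :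
    LInvariant R B L C := by
  obtain ⟨p, xs, ls, hinj, hlmem, hstep, rfl⟩ := hC
  rintro x ⟨i, rfl⟩ l hl hchi
  by_cases hll : l = ls i
  · exact ⟨i + 1, by rw [hll, hstep i]⟩
  · exfalso
    have hsum := sum_normSq_chiB (R := R) (L := L) hHad hB0 (xs i)
    have hx1 : Complex.normSq (chiB B (tauL R (ls i) (xs i))) = 1 := by
      rw [hstep i]
      have habs := hBC (xs (i + 1)) ⟨i + 1, rfl⟩
      rw [Complex.normSq_eq_norm_sq, habs]; norm_num
    have hmem : ls i ∈ L := hlmem i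
    have hrest : ∑ l' ∈ L.erase (ls i),
        Complex.normSq (chiB B (tauL R l' (xs i))) = 0 := by
      rw [← Finset.add_sum_erase L
        (fun l' => Complex.normSq (chiB B (tauL R l' (xs i)))) hmem] at hsum
      try simp only [] at hsum
      linarith
    have hl' : l ∈ L.erase (ls i) := Finset.mem_erase.mpr ⟨hll, hl⟩
    have hz := (Finset.sum_eq_zero_iff_of_nonneg
      (fun _ _ => Complex.normSq_nonneg _)).mp hrest l hl'
    exact hchi (by rwa [Complex.normSq_eq_zero] at hz)

lemma self_mem_orbitO (x : Fin d → ℝ) : x ∈ orbitO R B L x :=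
  ⟨0, fun _ => x, rfl, rfl, fun i => i.elim0⟩

lemma orbitO_invariant (x : Fin d → ℝ) : LInvariant R B L (orbitO R B L x) := by
  rintro y ⟨n, z, hz0, hzlast, hstep⟩ l hl hchi
  refine ⟨n + 1, fun j => if h : (j : ℕ) < n + 1 then z ⟨j, h⟩ else tauL R l y,
    ?_, ?_, ?_⟩
  · have h0 : ((0 : Fin (n + 2)) : ℕ) < n + 1 := by simp
    simp only [dif_pos h0, ← hz0]
    congr 1
  · have hlast : ¬ ((Fin.last (n + 1) : Fin (n + 2)) : ℕ) < n + 1 := by simp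
    simp only [dif_neg hlast]
  · intro i
    by_cases hi : (i : ℕ) < n
    · obtain ⟨l', hl', hstep', hchi'⟩ := hstep ⟨i, hi⟩
      have hc : ((i.castSucc : Fin (n + 2)) : ℕ) < n + 1 := by
        rw [Fin.coe_castSucc]; omega
      have hs : ((i.succ : Fin (n + 2)) : ℕ) < n + 1 := by
        rw [Fin.val_succ]; omega
      refine ⟨l', hl', ?_, ?_⟩
      · simp only [dif_pos hc, dif_pos hs]
        have e1 : (⟨(i.castSucc : Fin (n+2)).val, hc⟩ : Fin (n+1))
            = (⟨i, hi⟩ : Fin n).castSucc := by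
          apply Fin.ext; simp
        have e2 : (⟨(i.succ : Fin (n+2)).val, hs⟩ : Fin (n+1))
            = (⟨i, hi⟩ : Fin n).succ := by
          apply Fin.ext; simp
        rw [e1, e2, hstep']
      · simp only [dif_pos hs]
        have e2 : (⟨(i.succ : Fin (n+2)).val, hs⟩ : Fin (n+1))
            = (⟨i, hi⟩ : Fin n).succ := by
          apply Fin.ext; simp
        rw [e2]; exact hchi'
    · have hieq : (i : ℕ) = n := by omega
      have hc : ((i.castSucc : Fin (n + 2)) : ℕ) < n + 1 := by
        rw [Fin.coe_castSucc]; omega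
      have hs : ¬ ((i.succ : Fin (n + 2)) : ℕ) < n + 1 := by
        rw [Fin.val_succ]; omega
      refine ⟨l, hl, ?_, ?_⟩
      · simp only [dif_pos hc, dif_neg hs]
        have e1 : (⟨(i.castSucc : Fin (n+2)).val, hc⟩ : Fin (n+1)) = Fin.last n := by
          apply Fin.ext; simp [hieq]
        rw [e1, hzlast]
      · simp only [dif_neg hs]; exact hchi

lemma orbitO_subset {x : Fin d → ℝ} {M : Set (Fin d → ℝ)}
    (hM : LInvariant R B L M) (hx : x ∈ M) : orbitO R B L x ⊆ M := by
  rintro y ⟨n, z, hz0, hzlast, hstep⟩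
  have key : ∀ j : Fin (n + 1), z j ∈ M := by
    intro j
    induction j using Fin.induction with
    | zero => rw [hz0]; exact hx
    | succ i ih =>
      obtain ⟨l, hl, hstepi, hchi⟩ := hstep i
      rw [← hstepi]
      exact hM _ ih l hl (by rw [hstepi]; exact hchi)
  rw [← hzlast]; exact key _

end ChunkD

section Main

variable {d : ℕ} {R : Matrix (Fin d) (Fin d) ℤ} {B L : Finset (Fin d → ℤ)}
  {XL : Set (Fin d → ℝ)} {dist' : (Fin d → ℝ) → (Fin d → ℝ) → ℝ} {c : ℝ}
  (hHad : IsHadamardPair R B L) (hB0 : (0 : Fin d → ℤ) ∈ B)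
  (hXLc : IsCompact XL) (hXLne : XL.Nonempty)
  (hXL : XL = ⋃ l ∈ L, tauL R l '' XL)
  (hd0 : ∀ x y, dist' x y = 0 ↔ x = y)
  (hdsymm : ∀ x y, dist' x y = dist' y x)
  (hdtri : ∀ x y z, dist' x z ≤ dist' x y + dist' y z)
  (hdtop : ∀ s : Set (Fin d → ℝ),
      IsOpen s ↔ ∀ x ∈ s, ∃ ε > 0, ∀ y, dist' x y < ε → y ∈ s)
  (hc0 : 0 ≤ c) (hc1 : c < 1)
  (hcl : ∀ l ∈ L, ∀ x y, dist' (tauL R l x) (tauL R l y) ≤ c * dist' x y)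

include hXL in
lemma XL_invariant : ∀ x ∈ XL, ∀ l ∈ L, tauL R l x ∈ XL := by
  intro x hx l hl
  have : tauL R l x ∈ ⋃ l ∈ L, tauL R l '' XL := Set.mem_biUnion hl ⟨x, hx, rfl⟩
  rwa [← hXL] at this

include hHad hB0 hXLc hXLne hXL hd0 hdsymm hdtri hdtop hc0 hc1 hcl in
lemma meets_XL {M : Set (Fin d → ℝ)} (hMne : M.Nonempty) (hMcl : IsClosed M)
    (hMinv : LInvariant R B L M) : (M ∩ XL).Nonempty := by
  obtain ⟨x₀, hx₀⟩ := hMne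
  obtain ⟨w₀, hw₀⟩ := hXLne
  choose f hf1 hf2 using fun x => exists_possible (R := R) (L := L) hHad hB0 x
  set g : ((Fin d → ℝ) × (Fin d → ℝ)) → ((Fin d → ℝ) × (Fin d → ℝ)) :=
    fun p => (tauL R (f p.1) p.1, tauL R (f p.1) p.2) with hg
  set D : ℝ := dist' x₀ w₀ with hD
  have hseq : ∀ n : ℕ, (g^[n] (x₀, w₀)).1 ∈ M ∧ (g^[n] (x₀, w₀)).2 ∈ XL ∧
      dist' (g^[n] (x₀, w₀)).1 (g^[n] (x₀, w₀)).2 ≤ c ^ n * D := by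
    intro n
    induction n with
    | zero => exact ⟨hx₀, hw₀, by simp [hD]⟩
    | succ n ih =>
      obtain ⟨h1, h2, h3⟩ := ih
      rw [Function.iterate_succ_apply']
      set p := g^[n] (x₀, w₀)
      refine ⟨hMinv p.1 h1 (f p.1) (hf1 p.1) (hf2 p.1),
        XL_invariant hXL p.2 h2 (f p.1) (hf1 p.1), ?_⟩
      calc dist' (tauL R (f p.1) p.1) (tauL R (f p.1) p.2)
          ≤ c * dist' p.1 p.2 := hcl (f p.1) (hf1 p.1) p.1 p.2
        _ ≤ c * (c ^ n * D) := by
            apply mul_le_mul_of_nonneg_left h3 hc0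
        _ = c ^ (n + 1) * D := by ring
  obtain ⟨wstar, hwstar, φ, hφ, hconv⟩ :=
    hXLc.tendsto_subseq (x := fun n => (g^[n] (x₀, w₀)).2) (fun n => (hseq n).2.1)
  have hDpos : 0 ≤ D := dist'_nonneg hd0 hdsymm hdtri _ _
  have hpow : Tendsto (fun k => c ^ (φ k) * D) atTop (𝓝 0) := by
    have h1 : Tendsto (fun n : ℕ => c ^ n * D) atTop (𝓝 0) := by
      have := (tendsto_pow_atTop_nhds_zero_of_lt_one hc0 hc1).mul_const D
      simpa using this
    exact h1.comp hφ.tendsto_atTop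
  have hterm2 : Tendsto
      (fun k => dist' (g^[φ k] (x₀, w₀)).2 (g^[φ k] (x₀, w₀)).1) atTop (𝓝 0) := by
    apply squeeze_zero (fun k => dist'_nonneg hd0 hdsymm hdtri _ _)
      (fun k => ?_) hpow
    rw [← hdsymm]
    exact (hseq (φ k)).2.2
  have hterm1 : Tendsto (fun k => dist' wstar (g^[φ k] (x₀, w₀)).2) atTop (𝓝 0) := by
    have hcont := (continuous_dist'_right hd0 hdsymm hdtri hdtop wstar).tendsto wstar
    have := hcont.comp hconv
    rwa [dist'_self hd0] at this
  have hmain : Tendsto (fun k => (g^[φ k] (x₀, w₀)).1) atTop (𝓝 wstar) := by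
    apply tendsto_of_dist' hd0 hdsymm hdtri hdtop
    apply squeeze_zero (fun k => dist'_nonneg hd0 hdsymm hdtri _ _)
      (fun k => hdtri wstar (g^[φ k] (x₀, w₀)).2 (g^[φ k] (x₀, w₀)).1)
    simpa using hterm1.add hterm2
  have hwM : wstar ∈ M :=
    hMcl.mem_of_tendsto hmain (Filter.Eventually.of_forall fun k => (hseq (φ k)).1)
  exact ⟨wstar, hwM, hwstar⟩

include hHad hB0 hXLc hXLne hXL hd0 hdsymm hdtri hdtop hc0 hc1 hcl in
lemma exists_minimal_inside {M : Set (Fin d → ℝ)} (hMne : M.Nonempty)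
    (hMcl : IsClosed M) (hMinv : LInvariant R B L M) :
    ∃ M', IsMinimalInv R B L M' ∧ (M ∩ M').Nonempty := by
  set S : Set (Set (Fin d → ℝ)) :=
    {S' | S' ⊆ M ∩ XL ∧ S'.Nonempty ∧ IsClosed S' ∧ LInvariant R B L S'} with hS
  have hMXLinv : LInvariant R B L (M ∩ XL) := by
    intro x hx l hl hchi
    exact ⟨hMinv x hx.1 l hl hchi, XL_invariant hXL x hx.2 l hl⟩
  have hMXLmem : M ∩ XL ∈ S :=
    ⟨le_refl _, meets_XL hHad hB0 hXLc hXLne hXL hd0 hdsymm hdtri hdtop hc0 hc1 hcl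
        hMne hMcl hMinv,
      hMcl.inter hXLc.isClosed, hMXLinv⟩
  have H : ∀ C ⊆ S, IsChain (· ⊆ ·) C → C.Nonempty → ∃ lb ∈ S, ∀ s ∈ C, lb ⊆ s := by
    intro C hCS hchain hCne
    refine ⟨⋂₀ C, ⟨?_, ?_, ?_, ?_⟩, fun s hs => Set.sInter_subset_of_mem hs⟩
    · obtain ⟨s, hs⟩ := hCne
      exact (Set.sInter_subset_of_mem hs).trans (hCS hs).1
    · haveI : Nonempty C := hCne.to_subtype
      apply IsCompact.nonempty_sInter_of_directed_nonempty_isCompact_isClosed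
      · intro s hs t ht
        rcases hchain.total hs ht with h | h
        · exact ⟨s, hs, le_refl _, h⟩
        · exact ⟨t, ht, h, le_refl _⟩
      · exact fun U hU => (hCS hU).2.1
      · exact fun U hU => hXLc.of_isClosed_subset (hCS hU).2.2.1
          ((hCS hU).1.trans Set.inter_subset_right)
      · exact fun U hU => (hCS hU).2.2.1
    · exact isClosed_sInter fun s hs => (hCS hs).2.2.1
    · intro x hx l hl hchi
      rw [Set.mem_sInter] at hx ⊢
      exact fun s hs => (hCS hs).2.2.2 x (hx s hs) l hl hchi
  obtain ⟨m, hmsub, hmmin⟩ := zorn_superset_nonempty S H (M ∩ XL) hMXLmem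
  have hmS : m ∈ S := hmmin.1
  refine ⟨m, ⟨hmS.2.1, hmS.2.2.1, hmS.2.2.2, ?_⟩, ?_⟩
  · intro M' hM'sub hM'ne hM'cl hM'inv
    have hM'S : M' ∈ S := ⟨hM'sub.trans hmS.1, hM'ne, hM'cl, hM'inv⟩
    exact Set.Subset.antisymm hM'sub (hmmin.2 hM'S hM'sub)
  · obtain ⟨y, hy⟩ := hmS.2.1
    exact ⟨y, (hmS.1 hy).1, hy⟩

include hHad hB0 hXLc hXLne hXL hd0 hdsymm hdtri hdtop hc0 hc1 hcl in
lemma minimal_subset_XL {M : Set (Fin d → ℝ)} (hM : IsMinimalInv R B L M) :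
    M ⊆ XL := by
  obtain ⟨hne, hclM, hinv, hmin⟩ := hM
  have hXLinv : LInvariant R B L (M ∩ XL) := by
    intro x hx l hl hchi
    exact ⟨hinv x hx.1 l hl hchi, XL_invariant hXL x hx.2 l hl⟩
  have h := meets_XL hHad hB0 hXLc hXLne hXL hd0 hdsymm hdtri hdtop hc0 hc1 hcl
    hne hclM hinv
  have heq : M ∩ XL = M := hmin (M ∩ XL) Set.inter_subset_left h
    (hclM.inter hXLc.isClosed) hXLinv
  rw [← heq]
  exact Set.inter_subset_right

lemma minimal_disjoint {M₁ M₂ : Set (Fin d → ℝ)} (h1 : IsMinimalInv R B L M₁)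
    (h2 : IsMinimalInv R B L M₂) (hne : M₁ ≠ M₂) : M₁ ∩ M₂ = ∅ := by
  by_contra h
  have hnonempty : (M₁ ∩ M₂).Nonempty := Set.nonempty_iff_ne_empty.mpr h
  have hinv : LInvariant R B L (M₁ ∩ M₂) := by
    intro x hx l hl hchi
    exact ⟨h1.2.2.1 x hx.1 l hl hchi, h2.2.2.1 x hx.2 l hl hchi⟩
  have hcl : IsClosed (M₁ ∩ M₂) := h1.2.1.inter h2.2.1
  have e1 : M₁ ∩ M₂ = M₁ := h1.2.2.2 _ Set.inter_subset_left hnonempty hcl hinv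
  have e2 : M₁ ∩ M₂ = M₂ := h2.2.2.2 _ Set.inter_subset_right hnonempty hcl hinv
  exact hne (e1 ▸ e2)

include hHad hB0 hXLc hXLne hXL hd0 hdsymm hdtri hdtop hc0 hc1 hcl in
lemma minimal_min_pair {M₁ M₂ : Set (Fin d → ℝ)} (h1 : IsMinimalInv R B L M₁)
    (h2 : IsMinimalInv R B L M₂) :
    ∃ a ∈ M₁, ∃ b ∈ M₂, ∀ u ∈ M₁, ∀ v ∈ M₂, dist' a b ≤ dist' u v := by
  have hc1' : IsCompact M₁ := hXLc.of_isClosed_subset h1.2.1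
    (minimal_subset_XL hHad hB0 hXLc hXLne hXL hd0 hdsymm hdtri hdtop hc0 hc1 hcl h1)
  have hc2' : IsCompact M₂ := hXLc.of_isClosed_subset h2.2.1
    (minimal_subset_XL hHad hB0 hXLc hXLne hXL hd0 hdsymm hdtri hdtop hc0 hc1 hcl h2)
  have hK : IsCompact (M₁ ×ˢ M₂) := hc1'.prod hc2'
  have hKne : (M₁ ×ˢ M₂).Nonempty := h1.1.prod h2.1
  obtain ⟨p, hp, hpmin⟩ := hK.exists_isMinOn hKne
    ((continuous_dist'_prod hd0 hdsymm hdtri hdtop).continuousOn)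
  exact ⟨p.1, hp.1, p.2, hp.2, fun u hu v hv => hpmin (Set.mk_mem_prod hu hv)⟩

include hHad hB0 hXLc hXLne hXL hd0 hdsymm hdtri hdtop hc0 hc1 hcl in
lemma minimal_finite : {M : Set (Fin d → ℝ) | IsMinimalInv R B L M}.Finite := by
  by_contra hinf
  have hinf' : {M : Set (Fin d → ℝ) | IsMinimalInv R B L M}.Infinite := hinf
  set e := hinf'.natEmbedding with he
  have hFmin : ∀ n, IsMinimalInv R B L (e n : Set (Fin d → ℝ)) := fun n => (e n).2
  have hFinj : ∀ {n m : ℕ}, (e n : Set (Fin d → ℝ)) = (e m : Set (Fin d → ℝ)) → n = m :=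
    fun h => e.injective (Subtype.ext h)
  choose x hx using fun n => (hFmin n).1
  have hxXL : ∀ n, x n ∈ XL := fun n =>
    minimal_subset_XL hHad hB0 hXLc hXLne hXL hd0 hdsymm hdtri hdtop hc0 hc1 hcl
      (hFmin n) (hx n)
  obtain ⟨xs, hxs, φ, hφ, hconv⟩ := hXLc.tendsto_subseq (x := x) hxXL
  have hpair := fun k : ℕ =>
    minimal_min_pair hHad hB0 hXLc hXLne hXL hd0 hdsymm hdtri hdtop hc0 hc1 hcl
      (hFmin (φ k)) (hFmin (φ (k + 1)))
  choose a ha b hb hmin using hpair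
  have hdisj : ∀ k, (e (φ k) : Set (Fin d → ℝ)) ∩ (e (φ (k + 1)) : Set (Fin d → ℝ)) = ∅ := by
    intro k
    apply minimal_disjoint (hFmin _) (hFmin _)
    intro hEq
    have := hFinj hEq
    have hlt := hφ (Nat.lt_succ_self k)
    rw [Nat.succ_eq_add_one] at hlt
    omega
  have hDpos : ∀ k, 0 < dist' (a k) (b k) := by
    intro k
    rcases (dist'_nonneg hd0 hdsymm hdtri (a k) (b k)).lt_or_eq with h | h
    · exact h
    · exfalso
      have heq : a k = b k := (hd0 _ _).mp h.symm
      have : a k ∈ (e (φ k) : Set (Fin d → ℝ)) ∩ (e (φ (k + 1)) : Set (Fin d → ℝ)) :=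
        ⟨ha k, heq ▸ hb k⟩
      rw [hdisj k] at this
      exact this
  have hxconv2 : Tendsto (fun k => x (φ (k + 1))) atTop (𝓝 xs) :=
    hconv.comp (tendsto_add_atTop_nat 1)
  have hpd : Tendsto (fun k => dist' (x (φ k)) (x (φ (k + 1)))) atTop (𝓝 0) := by
    have hp : Tendsto (fun k => (x (φ k), x (φ (k + 1)))) atTop (𝓝 (xs, xs)) :=
      hconv.prodMk_nhds hxconv2
    have := ((continuous_dist'_prod hd0 hdsymm hdtri hdtop).tendsto (xs, xs)).comp hp
    simp only [Function.comp] at this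
    rwa [dist'_self hd0] at this
  have habconv : Tendsto (fun k => dist' (a k) (b k)) atTop (𝓝 0) :=
    squeeze_zero (fun k => (hDpos k).le)
      (fun k => hmin k _ (hx (φ k)) _ (hx (φ (k + 1)))) hpd
  have haXL : ∀ k, a k ∈ XL := fun k =>
    minimal_subset_XL hHad hB0 hXLc hXLne hXL hd0 hdsymm hdtri hdtop hc0 hc1 hcl
      (hFmin (φ k)) (ha k)
  obtain ⟨astar, hastar, ψ, hψ, haconv⟩ := hXLc.tendsto_subseq (x := a) haXL
  have hbconv : Tendsto (fun j => b (ψ j)) atTop (𝓝 astar) := by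
    apply tendsto_of_dist' hd0 hdsymm hdtri hdtop
    apply squeeze_zero (fun j => dist'_nonneg hd0 hdsymm hdtri _ _)
      (fun j => hdtri astar (a (ψ j)) (b (ψ j)))
    have t1 : Tendsto (fun j => dist' astar (a (ψ j))) atTop (𝓝 0) := by
      have := ((continuous_dist'_right hd0 hdsymm hdtri hdtop astar).tendsto astar).comp haconv
      simp only [Function.comp_def] at this
      rwa [dist'_self hd0] at this
    have t2 : Tendsto (fun j => dist' (a (ψ j)) (b (ψ j))) atTop (𝓝 0) :=
      habconv.comp hψ.tendsto_atTop
    simpa using t1.add t2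
  obtain ⟨l, hl, hchi⟩ := exists_possible (R := R) (L := L) hHad hB0 astar
  have hU : IsOpen {y | chiB B (tauL R l y) ≠ 0} := by
    have : {y | chiB B (tauL R l y) ≠ 0}
        = (chiB B ∘ tauL R l) ⁻¹' {z | z ≠ 0} := rfl
    rw [this]
    exact isOpen_ne.preimage ((continuous_chiB B).comp (continuous_tauL R l))
  have hev1 : ∀ᶠ j in atTop, a (ψ j) ∈ {y | chiB B (tauL R l y) ≠ 0} :=
    haconv.eventually_mem (hU.mem_nhds hchi)
  have hev2 : ∀ᶠ j in atTop, b (ψ j) ∈ {y | chiB B (tauL R l y) ≠ 0} :=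
    hbconv.eventually_mem (hU.mem_nhds hchi)
  obtain ⟨j, hj1, hj2⟩ := (hev1.and hev2).exists
  have h1 : tauL R l (a (ψ j)) ∈ (e (φ (ψ j)) : Set (Fin d → ℝ)) :=
    (hFmin (φ (ψ j))).2.2.1 _ (ha (ψ j)) l hl hj1
  have h2 : tauL R l (b (ψ j)) ∈ (e (φ (ψ j + 1)) : Set (Fin d → ℝ)) :=
    (hFmin (φ (ψ j + 1))).2.2.1 _ (hb (ψ j)) l hl hj2
  have h3 : dist' (a (ψ j)) (b (ψ j)) ≤ dist' (tauL R l (a (ψ j))) (tauL R l (b (ψ j))) :=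
    hmin (ψ j) _ h1 _ h2
  have h4 : dist' (tauL R l (a (ψ j))) (tauL R l (b (ψ j)))
      ≤ c * dist' (a (ψ j)) (b (ψ j)) := hcl l hl _ _
  nlinarith [hDpos (ψ j)]

end Main


lemma minimal_eq_orbit_closure {d : ℕ} {R : Matrix (Fin d) (Fin d) ℤ}
    {B L : Finset (Fin d → ℤ)} {M : Set (Fin d → ℝ)}
    (hM : IsMinimalInv R B L M) {x : Fin d → ℝ} (hx : x ∈ M) :
    M = closure (orbitO R B L x) := by
  obtain ⟨hne, hcl, hinv, hmin⟩ := hM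
  have hsub : closure (orbitO R B L x) ⊆ M :=
    closure_minimal (orbitO_subset hinv hx) hcl
  exact (hmin _ hsub ⟨x, subset_closure (self_mem_orbitO x)⟩ isClosed_closure
    (closure_invariant (orbitO_invariant x))).symm

theorem stmt13
    (d N : ℕ) (R : Matrix (Fin d) (Fin d) ℤ) (hRexp : Expansive R)
    (B L : Finset (Fin d → ℤ))
    (hB0 : (0 : Fin d → ℤ) ∈ B) (hBcard : B.card = N)
    (hL0 : (0 : Fin d → ℤ) ∈ L) (hLcard : L.card = N)
    (hHad : IsHadamardPair R B L)
    -- the attractor X_L of the dual IFS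
    (XL : Set (Fin d → ℝ)) (hXLc : IsCompact XL) (hXLne : XL.Nonempty)
    (hXL : XL = ⋃ l ∈ L, tauL R l '' XL)
    -- a metric `dist'` generating the Euclidean topology making all τ_l strict
    -- contractions
    (dist' : (Fin d → ℝ) → (Fin d → ℝ) → ℝ)
    (hd0 : ∀ x y, dist' x y = 0 ↔ x = y)
    (hdsymm : ∀ x y, dist' x y = dist' y x)
    (hdtri : ∀ x y z, dist' x z ≤ dist' x y + dist' y z)
    (hdtop : ∀ s : Set (Fin d → ℝ),
      IsOpen s ↔ ∀ x ∈ s, ∃ ε > 0, ∀ y, dist' x y < ε → y ∈ s)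
    (hcontr : ∃ c, 0 ≤ c ∧ c < 1 ∧ ∀ l ∈ L, ∀ x y,
      dist' (tauL R l x) (tauL R l y) ≤ c * dist' x y) :
    -- (i)
    (∀ M : Set (Fin d → ℝ), LInvariant R B L M → LInvariant R B L (closure M)) ∧
    -- (ii)
    (∀ C : Set (Fin d → ℝ), IsLCycle R L C → BExtreme B C → LInvariant R B L C) ∧
    -- (iii)
    (∀ M : Set (Fin d → ℝ), IsMinimalInv R B L M →
      (∀ x ∈ M, M = closure (orbitO R B L x)) ∧ M ⊆ XL) ∧
    -- (iv)
    ({M : Set (Fin d → ℝ) | IsMinimalInv R B L M}.Finite ∧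
      (∀ M₁ M₂ : Set (Fin d → ℝ), IsMinimalInv R B L M₁ → IsMinimalInv R B L M₂ →
        M₁ ≠ M₂ → SepSets dist' M₁ M₂) ∧
      (∀ M : Set (Fin d → ℝ), M.Nonempty → IsClosed M → LInvariant R B L M →
        ∃ M', IsMinimalInv R B L M' ∧ (M ∩ M').Nonempty)) := by
  obtain ⟨c, hc0, hc1, hcl⟩ := hcontr
  refine ⟨?_, ?_, ?_, ?_, ?_, ?_⟩
  · exact fun M hM => closure_invariant hM
  · exact fun C hC hBC => cycle_invariant hHad hB0 hC hBC
  · intro M hM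
    exact ⟨fun x hx => minimal_eq_orbit_closure hM hx,
      minimal_subset_XL hHad hB0 hXLc hXLne hXL hd0 hdsymm hdtri hdtop hc0 hc1 hcl hM⟩
  · exact minimal_finite hHad hB0 hXLc hXLne hXL hd0 hdsymm hdtri hdtop hc0 hc1 hcl
  · intro M₁ M₂ h1 h2 hne
    obtain ⟨a, haM, b, hbM, hmin⟩ :=
      minimal_min_pair hHad hB0 hXLc hXLne hXL hd0 hdsymm hdtri hdtop hc0 hc1 hcl h1 h2
    refine ⟨dist' a b, ?_, fun u hu v hv => hmin u hu v hv⟩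
    rcases (dist'_nonneg hd0 hdsymm hdtri a b).lt_or_eq with h | h
    · exact h
    · exfalso
      have heq : a = b := (hd0 _ _).mp h.symm
      have hmem : a ∈ M₁ ∩ M₂ := ⟨haM, heq ▸ hbM⟩
      rw [minimal_disjoint h1 h2 hne] at hmem
      exact hmem
  · intro M hMne hMcl hMinv
    exact exists_minimal_inside hHad hB0 hXLc hXLne hXL hd0 hdsymm hdtri hdtop
      hc0 hc1 hcl hMne hMcl hMinv
end
end
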